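/- arXiv:2009.09256 — 6 statements merged into one kernel-verified Lean document; each statement's English description precedes it below -/
import Mathlib

section
/- Let X be a shift space whose language L has the specification property with gap size τ: for every v, w ∈ L there is u ∈ L with |u| ≤ τ such that vuw ∈ L. Then for every n ≥ 1, #L_n ≤ (τ+1) e^{τ h} e^{n h}, where h = h_top(X). -/
open Filter

/-- The left shift on one-sided sequences. -/
def shiftMap {A : Type*} (x : ℕ → A) : ℕ → A := fun n => x (n + 1)

/-- The language of `X`: all finite words appearing at the origin of elements
of `X` (by shift invariance, all words appearing anywhere). -/
def langL {A : Type*} (X : Set (ℕ → A)) : Set (List A) :=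
  {w | ∃ x ∈ X, ∀ i : Fin w.length, x i.val = w.get i}

/-- The number of length-`n` words in the language of `X`. -/
noncomputable def wcount {A : Type*} (X : Set (ℕ → A)) (n : ℕ) : ℕ :=
  {w ∈ langL X | w.length = n}.ncard

lemma ofFn_mem_langL {A : Type*} {X : Set (ℕ → A)} {x : ℕ → A} (hx : x ∈ X) (n : ℕ) :
    (List.ofFn fun i : Fin n => x i) ∈ langL X := by
  refine ⟨x, hx, fun i => ?_⟩
  simp [List.get_ofFn]

lemma extend_langL {A : Type*} {X : Set (ℕ → A)} {w : List A} (hw : w ∈ langL X)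
    (N : ℕ) (hN : w.length ≤ N) :
    ∃ z, z ∈ langL X ∧ z.length = N ∧ w <+: z := by
  obtain ⟨x, hx, hxw⟩ := hw
  refine ⟨List.ofFn fun i : Fin N => x i, ofFn_mem_langL hx N, by simp, ?_⟩
  rw [List.prefix_iff_eq_take]
  apply List.ext_getElem
  · simp [hN]
  · intro i h1 h2
    have h3 : i < w.length := h1
    have h4 : i < N := lt_of_lt_of_le h3 hN
    have := hxw ⟨i, h3⟩
    simp only [List.getElem_take, List.getElem_ofFn]
    rw [List.get_eq_getElem] at this
    simpa using this.symm

lemma wcount_finite {A : Type*} [Fintype A] (X : Set (ℕ → A)) (n : ℕ) :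
    {w ∈ langL X | w.length = n}.Finite :=
  (List.finite_length_eq (α := A) n).subset (fun _ hw => hw.2)

lemma one_le_wcount {A : Type*} [Fintype A] {X : Set (ℕ → A)} (hne : X.Nonempty) (n : ℕ) :
    1 ≤ wcount X n := by
  obtain ⟨x, hx⟩ := hne
  have hmem : (List.ofFn fun i : Fin n => x i) ∈ {w ∈ langL X | w.length = n} :=
    ⟨ofFn_mem_langL hx n, by simp⟩
  exact (Set.ncard_pos (wcount_finite X n)).mpr ⟨_, hmem⟩

lemma ncard_prod {α β : Type*} (s : Set α) (t : Set β) :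
    (s ×ˢ t).ncard = s.ncard * t.ncard := by
  rw [← Nat.card_coe_set_eq, ← Nat.card_coe_set_eq, ← Nat.card_coe_set_eq,
    ← Nat.card_prod]
  exact Nat.card_congr (Equiv.Set.prod s t)

lemma key_submult {A : Type*} [Fintype A] {X : Set (ℕ → A)} (τ : ℕ)
    (hspec : ∀ v ∈ langL X, ∀ w ∈ langL X,
      ∃ u ∈ langL X, u.length ≤ τ ∧ v ++ u ++ w ∈ langL X)
    (n m : ℕ) :
    wcount X n * wcount X m ≤ (τ + 1) * wcount X (n + m + τ) := by
  classical
  set S : Set (List A) := {w ∈ langL X | w.length = n} with hS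
  set T : Set (List A) := {w ∈ langL X | w.length = m} with hT
  set U : Set (List A) := {w ∈ langL X | w.length = n + m + τ} with hU
  choose u hu hulen hvuw using hspec
  choose z hz hzlen hzpre using fun (w : List A) (hw : w ∈ langL X) (N : ℕ)
    (hN : w.length ≤ N) => extend_langL hw N hN
  have hlen : ∀ (p : List A × List A) (h : p.1 ∈ langL X ∧ p.2 ∈ langL X ∧
      p.1.length = n ∧ p.2.length = m),
      (p.1 ++ u p.1 h.1 p.2 h.2.1 ++ p.2).length ≤ n + m + τ := by
    intro p h
    have := hulen p.1 h.1 p.2 h.2.1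
    simp only [List.length_append]
    omega
  set f : List A × List A → List A × ℕ := fun p =>
    if h : p.1 ∈ langL X ∧ p.2 ∈ langL X ∧ p.1.length = n ∧ p.2.length = m then
      (z _ (hvuw p.1 h.1 p.2 h.2.1) (n + m + τ) (hlen p h),
        (u p.1 h.1 p.2 h.2.1).length)
    else ([], 0) with hf
  have hmaps : ∀ p ∈ S ×ˢ T, f p ∈ U ×ˢ (Set.Iio (τ + 1)) := by
    rintro ⟨v, w⟩ ⟨⟨hv, hvl⟩, ⟨hw, hwl⟩⟩
    have hcond : v ∈ langL X ∧ w ∈ langL X ∧ v.length = n ∧ w.length = m :=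
      ⟨hv, hw, hvl, hwl⟩
    simp only [hf, dif_pos hcond]
    refine ⟨⟨hz _ _ _ _, hzlen _ _ _ _⟩, ?_⟩
    simpa [Nat.lt_succ_iff] using hulen v hv w hw
  have hinj : Set.InjOn f (S ×ˢ T) := by
    rintro ⟨v1, w1⟩ ⟨⟨hv1, hvl1⟩, ⟨hw1, hwl1⟩⟩ ⟨v2, w2⟩ ⟨⟨hv2, hvl2⟩, ⟨hw2, hwl2⟩⟩ heq
    have hc1 : v1 ∈ langL X ∧ w1 ∈ langL X ∧ v1.length = n ∧ w1.length = m :=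
      ⟨hv1, hw1, hvl1, hwl1⟩
    have hc2 : v2 ∈ langL X ∧ w2 ∈ langL X ∧ v2.length = n ∧ w2.length = m :=
      ⟨hv2, hw2, hvl2, hwl2⟩
    simp only [hf, dif_pos hc1, dif_pos hc2, Prod.mk.injEq] at heq
    obtain ⟨hzeq, hgeq⟩ := heq
    -- recover words from z and gap
    have recover : ∀ (v w : List A) (hc : v ∈ langL X ∧ w ∈ langL X ∧
        v.length = n ∧ w.length = m),
        v = (z _ (hvuw v hc.1 w hc.2.1) (n + m + τ) (hlen (v, w) hc)).take n ∧
        w = ((z _ (hvuw v hc.1 w hc.2.1) (n + m + τ) (hlen (v, w) hc)).drop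
          (n + (u v hc.1 w hc.2.1).length)).take m := by
      intro v w hc
      set uu := u v hc.1 w hc.2.1
      set zz := z _ (hvuw v hc.1 w hc.2.1) (n + m + τ) (hlen (v, w) hc)
      have hpre : (v ++ uu ++ w) <+: zz := hzpre _ _ _ _
      obtain ⟨r, hr⟩ := hpre
      constructor
      · have : v <+: zz := ⟨uu ++ w ++ r, by rw [← hr]; simp⟩
        rw [List.prefix_iff_eq_take] at this
        rwa [hc.2.2.1] at this
      · have hzr : zz = (v ++ uu) ++ (w ++ r) := by rw [← hr]; simp
        rw [hzr]
        have hlvu : (v ++ uu).length = n + uu.length := by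
          simp [hc.2.2.1]
        rw [← hlvu, List.drop_left, List.take_left' hc.2.2.2]
    obtain ⟨hv1t, hw1t⟩ := recover v1 w1 hc1
    obtain ⟨hv2t, hw2t⟩ := recover v2 w2 hc2
    have hveq : v1 = v2 := by rw [hv1t, hv2t, hzeq]
    have hweq : w1 = w2 := by rw [hw1t, hw2t, hzeq, hgeq]
    simp [hveq, hweq]
  have htfin : (U ×ˢ (Set.Iio (τ + 1))).Finite :=
    (wcount_finite X (n + m + τ)).prod (Set.finite_Iio _)
  have hcard := Set.ncard_le_ncard_of_injOn f hmaps hinj htfin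
  rw [ncard_prod, ncard_prod] at hcard
  have hIio : (Set.Iio (τ + 1) : Set ℕ).ncard = τ + 1 := by
    rw [← Finset.coe_Iio, Set.ncard_coe_finset, Nat.card_Iio]
  rw [hIio] at hcard
  calc wcount X n * wcount X m = S.ncard * T.ncard := rfl
    _ ≤ U.ncard * (τ + 1) := hcard
    _ = (τ + 1) * wcount X (n + m + τ) := Nat.mul_comm _ _

lemma pow_bound {A : Type*} [Fintype A] {X : Set (ℕ → A)} (τ : ℕ)
    (hspec : ∀ v ∈ langL X, ∀ w ∈ langL X,
      ∃ u ∈ langL X, u.length ≤ τ ∧ v ++ u ++ w ∈ langL X)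
    (n : ℕ) :
    ∀ k : ℕ, wcount X n ^ (k + 1) ≤ (τ + 1) ^ k * wcount X ((k + 1) * n + k * τ) := by
  intro k
  induction k with
  | zero => simp
  | succ k ih =>
    calc wcount X n ^ (k + 2) = wcount X n ^ (k + 1) * wcount X n := by ring
      _ ≤ ((τ + 1) ^ k * wcount X ((k + 1) * n + k * τ)) * wcount X n :=
          Nat.mul_le_mul_right _ ih
      _ = (τ + 1) ^ k * (wcount X ((k + 1) * n + k * τ) * wcount X n) := by ring
      _ ≤ (τ + 1) ^ k * ((τ + 1) * wcount X ((k + 1) * n + k * τ + n + τ)) :=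
          Nat.mul_le_mul_left _ (key_submult τ hspec _ _)
      _ = (τ + 1) ^ (k + 1) * wcount X ((k + 1) * n + k * τ + n + τ) := by ring
      _ = (τ + 1) ^ (k + 1) * wcount X ((k + 2) * n + (k + 1) * τ) := by
          congr 1; ring_nf

/-- For a shift space with specification (gap size `τ`), the number of
length-`n` words is at most `(τ+1) e^{τh} e^{nh}` where `h` is the
topological entropy. -/
theorem stmt_3 {A : Type*} [Fintype A] [TopologicalSpace A] [DiscreteTopology A]
    (X : Set (ℕ → A)) (hne : X.Nonempty) (hcl : IsClosed X)
    (hinv : shiftMap '' X = X) (τ : ℕ)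
    (hspec : ∀ v ∈ langL X, ∀ w ∈ langL X,
      ∃ u ∈ langL X, u.length ≤ τ ∧ v ++ u ++ w ∈ langL X)
    (h : ℝ)
    (hh : Tendsto (fun n : ℕ => Real.log (wcount X n) / n) atTop (nhds h)) :
    ∀ n : ℕ, 1 ≤ n →
      (wcount X n : ℝ) ≤ (τ + 1) * Real.exp (τ * h) * Real.exp (n * h) := by
  intro n hn
  -- positivity facts
  have hposN : ∀ m : ℕ, (1 : ℕ) ≤ wcount X m := one_le_wcount hne
  have hpos : ∀ m : ℕ, (0 : ℝ) < (wcount X m : ℝ) := by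
    intro m; exact_mod_cast hposN m
  -- the key log inequality: log (wcount X n) ≤ log (τ+1) + (n+τ) h
  have hlog : Real.log (wcount X n) ≤ Real.log (τ + 1) + (n + τ) * h := by
    set M : ℕ → ℕ := fun k => (k + 1) * n + k * τ with hM
    have hMpos : ∀ k, 0 < M k := by intro k; simp [hM]; omega
    -- per-k inequality
    have hstep : ∀ k : ℕ, Real.log (wcount X n) ≤
        (k / (k + 1) : ℝ) * Real.log (τ + 1) +
        ((M k : ℝ) / (k + 1)) * (Real.log (wcount X (M k)) / (M k)) := by
      intro k
      have hineq := pow_bound τ hspec n k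
      have hcast : ((wcount X n : ℝ)) ^ (k + 1) ≤ ((τ + 1 : ℕ) : ℝ) ^ k * (wcount X (M k) : ℝ) := by
        exact_mod_cast hineq
      have hkpos : (0 : ℝ) < (k : ℝ) + 1 := by positivity
      have hMk : (0 : ℝ) < (M k : ℝ) := by exact_mod_cast hMpos k
      have hl := Real.log_le_log (pow_pos (hpos n) _) hcast
      rw [Real.log_pow, Real.log_mul (by positivity) (ne_of_gt (hpos _)),
        Real.log_pow] at hl
      have hτ1 : ((τ + 1 : ℕ) : ℝ) = (τ : ℝ) + 1 := by push_cast; ring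
      rw [hτ1] at hl
      push_cast at hl
      -- hl : (k+1) * log c_n ≤ k * log (τ+1) + log c_{M k}
      have hRHSeq : (k / (k + 1) : ℝ) * Real.log ((τ : ℝ) + 1) +
          ((M k : ℝ) / (k + 1)) * (Real.log (wcount X (M k)) / (M k)) =
          ((k : ℝ) * Real.log ((τ : ℝ) + 1) + Real.log (wcount X (M k))) / ((k : ℝ) + 1) := by
        field_simp
      rw [hRHSeq, le_div_iff₀ hkpos]
      nlinarith [hl]
    -- limit of RHS
    have hMtop : Tendsto M atTop atTop := by
      apply tendsto_atTop_mono (fun k => ?_) tendsto_id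
      simp only [hM, id]
      calc (k : ℕ) ≤ (k + 1) * 1 := by omega
        _ ≤ (k + 1) * n := Nat.mul_le_mul_left _ hn
        _ ≤ (k + 1) * n + k * τ := Nat.le_add_right _ _
    have h3 : Tendsto (fun k => Real.log (wcount X (M k)) / (M k)) atTop (nhds h) :=
      hh.comp hMtop
    have h1 : Tendsto (fun k : ℕ => (k / (k + 1) : ℝ)) atTop (nhds 1) := by
      have := tendsto_one_div_add_atTop_nhds_zero_nat (𝕜 := ℝ)
      have h1' : Tendsto (fun k : ℕ => 1 - 1 / ((k : ℝ) + 1)) atTop (nhds (1 - 0)) :=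
        tendsto_const_nhds.sub this
      rw [sub_zero] at h1'
      refine h1'.congr (fun k => ?_)
      have : ((k : ℝ) + 1) ≠ 0 := by positivity
      field_simp
      ring
    have h2 : Tendsto (fun k : ℕ => ((M k : ℝ) / (k + 1))) atTop (nhds ((n : ℝ) + τ)) := by
      have hτ' : Tendsto (fun k : ℕ => (n : ℝ) + (τ : ℝ) * (k / (k + 1))) atTop
          (nhds ((n : ℝ) + (τ : ℝ) * 1)) :=
        tendsto_const_nhds.add (tendsto_const_nhds.mul h1)
      rw [mul_one] at hτ'
      refine hτ'.congr (fun k => ?_)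
      have : ((k : ℝ) + 1) ≠ 0 := by positivity
      simp only [hM]
      push_cast
      field_simp
    have hRHS : Tendsto (fun k : ℕ => (k / (k + 1) : ℝ) * Real.log (τ + 1) +
        ((M k : ℝ) / (k + 1)) * (Real.log (wcount X (M k)) / (M k))) atTop
        (nhds (1 * Real.log (τ + 1) + ((n : ℝ) + τ) * h)) :=
      ((h1.mul tendsto_const_nhds).add (h2.mul h3))
    rw [one_mul] at hRHS
    exact le_of_tendsto_of_tendsto tendsto_const_nhds hRHS
      (Eventually.of_forall hstep)
  -- exponentiate
  have hexp := Real.exp_le_exp.mpr hlog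
  rw [Real.exp_log (hpos n)] at hexp
  calc (wcount X n : ℝ) ≤ Real.exp (Real.log (τ + 1) + ((n : ℝ) + τ) * h) := hexp
    _ = (τ + 1) * Real.exp (τ * h) * Real.exp (n * h) := by
      rw [Real.exp_add]
      rw [Real.exp_log (by positivity)]
      rw [show ((n : ℝ) + τ) * h = τ * h + n * h by ring, Real.exp_add]
      ring
end

section
/- Let X be a shift space whose language L admits a decomposition C^p · G · C^s (every w ∈ L factors as w = u^p v u^s with u^p ∈ C^p, v ∈ G, u^s ∈ C^s). Suppose #G_j ≤ Q e^{j h} for all j, where h = h_top(X) and Q ≥ 1, and suppose Σ_i #(C^p_i ∪ C^s_i) e^{-ih} < ∞. Then for any r ∈ (0,1) there exists M ∈ ℕ such that #G^M_n ≥ r · #L_n for all n, where G^M_n is the set of length-n words of the form u^p v u^s with |u^p|, |u^s| ≤ M. -/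
open Filter

/-- Number of length-`n` words in a collection `S`. -/
noncomputable def scount {A : Type*} (S : Set (List A)) (n : ℕ) : ℕ :=
  {w ∈ S | w.length = n}.ncard

/-- The collection `G^M`: length-`n` words in the language of the form
`u^p v u^s` with `u^p ∈ C^p`, `v ∈ G`, `u^s ∈ C^s` and `|u^p|, |u^s| ≤ M`. -/
def GM {A : Type*} (X : Set (ℕ → A)) (Cp G Cs : Set (List A)) (M n : ℕ) :
    Set (List A) :=
  {w | w ∈ langL X ∧ w.length = n ∧
    ∃ up ∈ Cp, ∃ v ∈ G, ∃ us ∈ Cs,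
      up.length ≤ M ∧ us.length ≤ M ∧ w = up ++ v ++ us}

section Aux

variable {A : Type*} [Fintype A]

lemma words_finite (S : Set (List A)) (n : ℕ) : {w ∈ S | w.length = n}.Finite :=
  (List.finite_length_eq A n).subset fun _ hw => hw.2

lemma scount_eq_card (S : Set (List A)) (n : ℕ) :
    scount S n = (words_finite S n).toFinset.card := by
  rw [scount, Set.ncard_eq_toFinset_card _ (words_finite S n)]

lemma scount_mono {S T : Set (List A)} (hST : S ⊆ T) (n : ℕ) :
    scount S n ≤ scount T n :=
  Set.ncard_le_ncard (fun w hw => ⟨hST hw.1, hw.2⟩) (words_finite T n)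

/-- The key combinatorial counting bound. -/
lemma counting_bound (X : Set (ℕ → A)) (Cp G Cs : Set (List A))
    (hdecomp : ∀ w ∈ langL X, ∃ up ∈ Cp, ∃ v ∈ G, ∃ us ∈ Cs, w = up ++ v ++ us)
    (M n : ℕ) :
    wcount X n ≤ (GM X Cp G Cs M n).ncard +
      ∑ p ∈ (Finset.range (n+1) ×ˢ Finset.range (n+1)).filter
          (fun p => p.1 + p.2 ≤ n ∧ (M < p.1 ∨ M < p.2)),
        scount Cp p.1 * scount G (n - p.1 - p.2) * scount Cs p.2 := by
  classical
  have hGMfin : (GM X Cp G Cs M n).Finite :=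
    (words_finite (langL X) n).subset (fun w hw => ⟨hw.1, hw.2.1⟩)
  set LnF : Finset (List A) := (words_finite (langL X) n).toFinset with hLnF
  set GMF : Finset (List A) := hGMfin.toFinset with hGMF
  have hsub : GMF ⊆ LnF := by
    intro w hw
    simp only [hGMF, hLnF, Set.Finite.mem_toFinset] at hw ⊢
    exact ⟨hw.1, hw.2.1⟩
  set badP := (Finset.range (n+1) ×ˢ Finset.range (n+1)).filter
      (fun p => p.1 + p.2 ≤ n ∧ (M < p.1 ∨ M < p.2)) with hbadP
  set Im : ℕ × ℕ → Finset (List A) := fun p =>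
    Finset.image₂ (· ++ ·)
      (Finset.image₂ (· ++ ·) (words_finite Cp p.1).toFinset
        (words_finite G (n - p.1 - p.2)).toFinset)
      (words_finite Cs p.2).toFinset with hIm
  have hcover : LnF \ GMF ⊆ badP.biUnion Im := by
    intro w hw
    rw [Finset.mem_sdiff] at hw
    obtain ⟨hwL, hwG⟩ := hw
    rw [hLnF, Set.Finite.mem_toFinset] at hwL
    obtain ⟨hwlang, hwlen⟩ := hwL
    obtain ⟨up, hup, v, hv, us, hus, hw⟩ := hdecomp w hwlang
    have hbad : M < up.length ∨ M < us.length := by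
      by_contra hc
      push_neg at hc
      apply hwG
      rw [hGMF, Set.Finite.mem_toFinset]
      exact ⟨hwlang, hwlen, up, hup, v, hv, us, hus, hc.1, hc.2, hw⟩
    have hlen : up.length + v.length + us.length = n := by
      subst hw; simp at hwlen ⊢; omega
    refine Finset.mem_biUnion.2 ⟨(up.length, us.length), ?_, ?_⟩
    · rw [hbadP, Finset.mem_filter, Finset.mem_product, Finset.mem_range,
        Finset.mem_range]
      exact ⟨⟨by omega, by omega⟩, by omega, hbad⟩
    · rw [hIm]
      refine Finset.mem_image₂.2 ⟨up ++ v, ?_, us, ?_, by rw [hw]⟩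
      · refine Finset.mem_image₂.2 ⟨up, ?_, v, ?_, rfl⟩
        · rw [Set.Finite.mem_toFinset]; exact ⟨hup, rfl⟩
        · rw [Set.Finite.mem_toFinset]; exact ⟨hv, by simp; omega⟩
      · rw [Set.Finite.mem_toFinset]; exact ⟨hus, rfl⟩
  have hbadcard : (LnF \ GMF).card ≤
      ∑ p ∈ badP, scount Cp p.1 * scount G (n - p.1 - p.2) * scount Cs p.2 := by
    calc (LnF \ GMF).card ≤ (badP.biUnion Im).card := Finset.card_le_card hcover
      _ ≤ ∑ p ∈ badP, (Im p).card := Finset.card_biUnion_le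
      _ ≤ ∑ p ∈ badP, scount Cp p.1 * scount G (n - p.1 - p.2) * scount Cs p.2 := by
          refine Finset.sum_le_sum fun p _ => ?_
          rw [hIm, scount_eq_card, scount_eq_card, scount_eq_card]
          calc (Finset.image₂ (· ++ ·)
              (Finset.image₂ (· ++ ·) (words_finite Cp p.1).toFinset
                (words_finite G (n - p.1 - p.2)).toFinset)
              (words_finite Cs p.2).toFinset).card
              ≤ (Finset.image₂ (· ++ ·) (words_finite Cp p.1).toFinset
                  (words_finite G (n - p.1 - p.2)).toFinset).card *
                (words_finite Cs p.2).toFinset.card := Finset.card_image₂_le _ _ _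
            _ ≤ (words_finite Cp p.1).toFinset.card *
                  (words_finite G (n - p.1 - p.2)).toFinset.card *
                (words_finite Cs p.2).toFinset.card :=
                Nat.mul_le_mul_right _ (Finset.card_image₂_le _ _ _)
  have hw : wcount X n = LnF.card := by
    rw [wcount, Set.ncard_eq_toFinset_card _ (words_finite (langL X) n)]
  have hg : (GM X Cp G Cs M n).ncard = GMF.card := by
    rw [Set.ncard_eq_toFinset_card _ hGMfin]
  have := Finset.card_sdiff_of_subset hsub
  have hle := Finset.card_le_card hsub
  omega

end Aux

/-- If the language of `X` admits a decomposition `C^p · G · C^s`, the good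
words satisfy `#G_j ≤ Q e^{jh}`, and `Σ_i #(C^p_i ∪ C^s_i) e^{-ih} < ∞`,
then for any `r ∈ (0,1)` there is `M` with `#G^M_n ≥ r #L_n` for all `n`. -/
theorem stmt_7 {A : Type*} [Fintype A] [TopologicalSpace A] [DiscreteTopology A]
    (X : Set (ℕ → A)) (hne : X.Nonempty) (hcl : IsClosed X)
    (hinv : shiftMap '' X = X)
    (Cp G Cs : Set (List A))
    (hCp : Cp ⊆ langL X) (hG : G ⊆ langL X) (hCs : Cs ⊆ langL X)
    (hdecomp : ∀ w ∈ langL X, ∃ up ∈ Cp, ∃ v ∈ G, ∃ us ∈ Cs, w = up ++ v ++ us)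
    (h Q : ℝ) (hQ : 1 ≤ Q)
    (hLlow : ∀ n : ℕ, Real.exp (n * h) ≤ (wcount X n : ℝ))
    (hGup : ∀ j : ℕ, (scount G j : ℝ) ≤ Q * Real.exp (j * h))
    (hsum : Summable (fun i : ℕ =>
      (scount (Cp ∪ Cs) i : ℝ) * Real.exp (-(i * h)))) :
    ∀ r : ℝ, 0 < r → r < 1 → ∃ M : ℕ, ∀ n : ℕ,
      r * (wcount X n : ℝ) ≤ ((GM X Cp G Cs M n).ncard : ℝ) := by
  intro r hr0 hr1
  classical
  set f : ℕ → ℝ := fun i => (scount (Cp ∪ Cs) i : ℝ) * Real.exp (-(i * h)) with hf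
  have hf0 : ∀ i, 0 ≤ f i := fun i =>
    mul_nonneg (Nat.cast_nonneg _) (Real.exp_pos _).le
  set S : ℝ := ∑' i, f i with hS
  have hS0 : 0 ≤ S := tsum_nonneg hf0
  set ε : ℝ := (1 - r) / (2 * Q * (S + 1)) with hε
  have hQ0 : (0:ℝ) < Q := lt_of_lt_of_le one_pos hQ
  have hS1 : (0:ℝ) < S + 1 := by linarith
  have hε0 : 0 < ε := div_pos (by linarith) (by positivity)
  have htail : Tendsto (fun M => ∑' k, f (k + M)) atTop (nhds 0) :=
    tendsto_sum_nat_add f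
  obtain ⟨N, hN⟩ := (htail.eventually (gt_mem_nhds hε0)).exists_forall_of_atTop
  refine ⟨N, fun n => ?_⟩
  have hT : ∑' k, f (k + (N + 1)) < ε := hN (N + 1) (Nat.le_succ N)
  have hTsummable : Summable fun k => f (k + (N + 1)) :=
    (summable_nat_add_iff (N + 1)).2 hsum
  have hT0 : 0 ≤ ∑' k, f (k + (N + 1)) := tsum_nonneg (fun k => hf0 _)
  -- the counting bound
  have hcount := counting_bound X Cp G Cs hdecomp N n
  set badP := (Finset.range (n+1) ×ˢ Finset.range (n+1)).filter
      (fun p => p.1 + p.2 ≤ n ∧ (N < p.1 ∨ N < p.2)) with hbadP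
  -- bound each term of the sum
  have hterm : ∀ p ∈ badP,
      (scount Cp p.1 * scount G (n - p.1 - p.2) * scount Cs p.2 : ℝ) ≤
        Q * Real.exp (n * h) * (f p.1 * f p.2) := by
    intro p hp
    rw [hbadP, Finset.mem_filter, Finset.mem_product] at hp
    obtain ⟨⟨-, -⟩, hpn, -⟩ := hp
    obtain ⟨i, k⟩ := p
    simp only at hpn ⊢
    have hik : i + k ≤ n := hpn
    have hcast : ((n - i - k : ℕ) : ℝ) = (n : ℝ) - i - k := by
      rw [Nat.sub_sub, Nat.cast_sub hik]
      push_cast; ring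
    have hexp : Real.exp ((n - i - k : ℕ) * h) =
        Real.exp (n * h) * Real.exp (-(i * h)) * Real.exp (-(k * h)) := by
      rw [← Real.exp_add, ← Real.exp_add, hcast]; ring_nf
    have h1 : (scount Cp i : ℝ) ≤ (scount (Cp ∪ Cs) i : ℝ) := by
      exact_mod_cast scount_mono Set.subset_union_left i
    have h2 : (scount Cs k : ℝ) ≤ (scount (Cp ∪ Cs) k : ℝ) := by
      exact_mod_cast scount_mono Set.subset_union_right k
    have h3 := hGup (n - i - k)
    calc (scount Cp i * scount G (n - i - k) * scount Cs k : ℝ)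
        ≤ (scount (Cp ∪ Cs) i : ℝ) * (Q * Real.exp ((n - i - k : ℕ) * h)) *
            (scount (Cp ∪ Cs) k : ℝ) := by
          apply mul_le_mul
          · exact mul_le_mul h1 h3 (Nat.cast_nonneg _)
              (le_trans (Nat.cast_nonneg _) h1)
          · exact h2
          · exact Nat.cast_nonneg _
          · positivity
      _ = Q * Real.exp (n * h) * (f i * f k) := by
          rw [hexp, hf]; ring
  have hsum1 : ∑ p ∈ badP,
      (scount Cp p.1 * scount G (n - p.1 - p.2) * scount Cs p.2 : ℝ) ≤
      Q * Real.exp (n * h) * ∑ p ∈ badP, f p.1 * f p.2 := by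
    rw [Finset.mul_sum]
    exact Finset.sum_le_sum hterm
  -- bound the sum of f p.1 * f p.2 over bad pairs
  have hIco : ∑ i ∈ Finset.Ico (N + 1) (n + 1), f i < ε := by
    calc ∑ i ∈ Finset.Ico (N + 1) (n + 1), f i
        = ∑ i ∈ Finset.range (n + 1 - (N + 1)), f (N + 1 + i) :=
          Finset.sum_Ico_eq_sum_range f (N + 1) (n + 1)
      _ = ∑ i ∈ Finset.range (n + 1 - (N + 1)), f (i + (N + 1)) := by
          refine Finset.sum_congr rfl fun i _ => ?_
          rw [add_comm]
      _ ≤ ∑' k, f (k + (N + 1)) :=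
          Summable.sum_le_tsum _ (fun i _ => hf0 _) hTsummable
      _ < ε := hT
  have hrange : ∑ i ∈ Finset.range (n + 1), f i ≤ S :=
    Summable.sum_le_tsum _ (fun i _ => hf0 _) hsum
  have hIco0 : 0 ≤ ∑ i ∈ Finset.Ico (N + 1) (n + 1), f i :=
    Finset.sum_nonneg fun i _ => hf0 i
  have hrange0 : 0 ≤ ∑ i ∈ Finset.range (n + 1), f i :=
    Finset.sum_nonneg fun i _ => hf0 i
  have hsplit : ∑ p ∈ badP, f p.1 * f p.2 ≤ 2 * ε * (S + 1) := by
    set P1 := (Finset.Ico (N + 1) (n + 1)) ×ˢ (Finset.range (n + 1)) with hP1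
    set P2 := (Finset.range (n + 1)) ×ˢ (Finset.Ico (N + 1) (n + 1)) with hP2
    have hsubP : badP ⊆ P1 ∪ P2 := by
      intro p hp
      rw [hbadP, Finset.mem_filter, Finset.mem_product, Finset.mem_range,
        Finset.mem_range] at hp
      obtain ⟨⟨h1, h2⟩, -, h3⟩ := hp
      rw [Finset.mem_union, hP1, hP2, Finset.mem_product, Finset.mem_product,
        Finset.mem_Ico, Finset.mem_Ico, Finset.mem_range, Finset.mem_range]
      omega
    have hP1sum : ∑ p ∈ P1, f p.1 * f p.2 =
        (∑ i ∈ Finset.Ico (N + 1) (n + 1), f i) *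
          (∑ k ∈ Finset.range (n + 1), f k) := by
      rw [Finset.sum_product, Finset.sum_mul]
      exact Finset.sum_congr rfl fun i _ => by rw [Finset.mul_sum]
    have hP2sum : ∑ p ∈ P2, f p.1 * f p.2 =
        (∑ i ∈ Finset.range (n + 1), f i) *
          (∑ k ∈ Finset.Ico (N + 1) (n + 1), f k) := by
      rw [Finset.sum_product, Finset.sum_mul]
      exact Finset.sum_congr rfl fun i _ => by rw [Finset.mul_sum]
    calc ∑ p ∈ badP, f p.1 * f p.2
        ≤ ∑ p ∈ P1 ∪ P2, f p.1 * f p.2 :=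
          Finset.sum_le_sum_of_subset_of_nonneg hsubP
            (fun p _ _ => mul_nonneg (hf0 _) (hf0 _))
      _ ≤ ∑ p ∈ P1, f p.1 * f p.2 + ∑ p ∈ P2, f p.1 * f p.2 := by
          have h1 := Finset.sum_union_inter (s₁ := P1) (s₂ := P2)
            (f := fun p : ℕ × ℕ => f p.1 * f p.2)
          have h2 : (0:ℝ) ≤ ∑ p ∈ P1 ∩ P2, f p.1 * f p.2 :=
            Finset.sum_nonneg fun p _ => mul_nonneg (hf0 _) (hf0 _)
          linarith
      _ ≤ ε * (S + 1) + (S + 1) * ε := by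
          rw [hP1sum, hP2sum]
          have ha : (∑ i ∈ Finset.Ico (N + 1) (n + 1), f i) *
              (∑ k ∈ Finset.range (n + 1), f k) ≤ ε * (S + 1) :=
            mul_le_mul hIco.le (by linarith) hrange0 hε0.le
          have hb : (∑ i ∈ Finset.range (n + 1), f i) *
              (∑ k ∈ Finset.Ico (N + 1) (n + 1), f k) ≤ (S + 1) * ε :=
            mul_le_mul (by linarith) hIco.le hIco0 (by linarith)
          linarith
      _ = 2 * ε * (S + 1) := by ring
  -- put everything together
  have hmain : (wcount X n : ℝ) ≤ ((GM X Cp G Cs N n).ncard : ℝ) +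
      (1 - r) * Real.exp (n * h) := by
    have hcast : (wcount X n : ℝ) ≤ ((GM X Cp G Cs N n).ncard : ℝ) +
        ∑ p ∈ badP, (scount Cp p.1 * scount G (n - p.1 - p.2) * scount Cs p.2 : ℝ) := by
      exact_mod_cast hcount
    have hfinal : ∑ p ∈ badP,
        (scount Cp p.1 * scount G (n - p.1 - p.2) * scount Cs p.2 : ℝ) ≤
        (1 - r) * Real.exp (n * h) := by
      calc ∑ p ∈ badP,
          (scount Cp p.1 * scount G (n - p.1 - p.2) * scount Cs p.2 : ℝ)
          ≤ Q * Real.exp (n * h) * ∑ p ∈ badP, f p.1 * f p.2 := hsum1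
        _ ≤ Q * Real.exp (n * h) * (2 * ε * (S + 1)) := by
            gcongr
        _ = (1 - r) * Real.exp (n * h) := by
            rw [hε]; field_simp
    linarith
  have hexp_le := hLlow n
  have hGM0 : (0:ℝ) ≤ ((GM X Cp G Cs N n).ncard : ℝ) := Nat.cast_nonneg _
  nlinarith [hmain, hexp_le, hr1, hr0]
end

section
/- Let β > 1. The β-shift X_β has the specification property if and only if the lexicographically maximal sequence z of X_β does not contain arbitrarily long runs of consecutive 0's. -/
/-- The coding of a point `x ∈ [0,1)` under the `β`-transformation
`f(y) = βy mod 1`: the `n`-th digit is `⌊β f^n(x)⌋`. -/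
noncomputable def betaCode (β : ℝ) (x : ℝ) : ℕ → ℕ :=
  fun n => ⌊β * (fun y : ℝ => Int.fract (β * y))^[n] x⌋₊

/-- The `β`-shift: the closure of the set of codings of points of `[0,1)`. -/
noncomputable def betaShift (β : ℝ) : Set (ℕ → ℕ) :=
  closure (betaCode β '' Set.Ico (0 : ℝ) 1)

/-- The language of a set of sequences. -/
def langN (X : Set (ℕ → ℕ)) : Set (List ℕ) :=
  {w | ∃ x ∈ X, ∀ i : Fin w.length, x i.val = w.get i}

namespace StmtAux

/-- The β-transformation. -/
noncomputable def bT (β : ℝ) (y : ℝ) : ℝ := Int.fract (β * y)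

lemma bT_mem (β y : ℝ) : bT β y ∈ Set.Ico (0:ℝ) 1 :=
  ⟨Int.fract_nonneg _, Int.fract_lt_one _⟩

lemma iter_mem (β : ℝ) {y : ℝ} (hy : y ∈ Set.Ico (0:ℝ) 1) (n : ℕ) :
    (bT β)^[n] y ∈ Set.Ico (0:ℝ) 1 := by
  induction n with
  | zero => exact hy
  | succ n _ => rw [Function.iterate_succ_apply']; exact bT_mem β _

lemma betaCode_eq (β x : ℝ) (n : ℕ) : betaCode β x n = ⌊β * (bT β)^[n] x⌋₊ := rfl

lemma betaCode_succ (β x : ℝ) (n : ℕ) :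
    betaCode β x (n+1) = betaCode β (bT β x) n := by
  simp only [betaCode_eq, betaCode]
  rw [Function.iterate_succ_apply]
  rfl

lemma bT_eq {β : ℝ} (hβ : 0 < β) {t : ℝ} (ht : 0 ≤ t) :
    bT β t = β * t - (⌊β * t⌋₊ : ℝ) := by
  have h0 : 0 ≤ β * t := mul_nonneg hβ.le ht
  have : ((⌊β * t⌋₊ : ℝ)) = (⌊β * t⌋ : ℝ) := by exact_mod_cast Int.natCast_floor_eq_floor h0
  rw [bT, Int.fract, this]

/-- shift of a sequence. -/
def shf (p : ℕ) (f : ℕ → ℕ) : ℕ → ℕ := fun i => f (i + p)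

lemma shf_shf (a b : ℕ) (f : ℕ → ℕ) : shf a (shf b f) = shf (a + b) f := by
  funext i; simp only [shf]; congr 1; omega

lemma shf_zero (f : ℕ → ℕ) : shf 0 f = f := by funext i; simp [shf]

/-- value of the first `n` digits of `f` in base `β`. -/
noncomputable def valF (β : ℝ) : (ℕ → ℕ) → ℕ → ℝ
  | _, 0 => 0
  | f, (n+1) => ((f 0 : ℝ) + valF β (shf 1 f) n) / β

lemma valF_zero (β : ℝ) (f : ℕ → ℕ) : valF β f 0 = 0 := rfl

lemma valF_succ (β : ℝ) (f : ℕ → ℕ) (n : ℕ) :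
    valF β f (n+1) = ((f 0 : ℝ) + valF β (shf 1 f) n) / β := rfl

lemma valF_nonneg {β : ℝ} (hβ : 0 < β) (f : ℕ → ℕ) (n : ℕ) : 0 ≤ valF β f n := by
  induction n generalizing f with
  | zero => exact le_refl _
  | succ n ih =>
    rw [valF_succ]
    have := ih (shf 1 f)
    positivity

lemma valF_congr {β : ℝ} {f g : ℕ → ℕ} {n : ℕ} (h : ∀ i < n, f i = g i) :
    valF β f n = valF β g n := by
  induction n generalizing f g with
  | zero => rfl
  | succ n ih =>
    rw [valF_succ, valF_succ, h 0 (by omega),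
      ih (f := shf 1 f) (g := shf 1 g) (fun i hi => h (i+1) (by omega))]

lemma valF_split {β : ℝ} (hβ : 0 < β) (p : ℕ) (f : ℕ → ℕ) (q : ℕ) :
    valF β f (p + q) = valF β f p + (β ^ p)⁻¹ * valF β (shf p f) q := by
  induction p generalizing f with
  | zero => simp [shf_zero, valF_zero]
  | succ p ih =>
    have hb : β ≠ 0 := hβ.ne'
    have h1 : p + 1 + q = (p + q) + 1 := by omega
    rw [h1, valF_succ, ih (shf 1 f), valF_succ, shf_shf]
    have h2 : shf (p + 1) f = shf (p + 1) f := rfl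
    rw [pow_succ]
    field_simp
    ring

lemma valF_ge_single {β : ℝ} (hβ : 0 < β) (f : ℕ → ℕ) {j q : ℕ} (hj : j < q) :
    (f j : ℝ) * (β ^ (j+1))⁻¹ ≤ valF β f q := by
  have h1 : q = j + (q - j - 1 + 1) := by omega
  rw [h1, valF_split hβ, valF_succ]
  have h2 : shf j f 0 = f j := by simp [shf]
  have h3 := valF_nonneg hβ (shf 1 (shf j f)) (q - j - 1)
  have h4 := valF_nonneg hβ f j
  have h5 : (0:ℝ) < β ^ j := pow_pos hβ j
  have h6 : (0:ℝ) < β ^ (j+1) := pow_pos hβ _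
  rw [h2, pow_succ, mul_inv]
  have : (f j : ℝ) * ((β ^ j)⁻¹ * β⁻¹) ≤ (β ^ j)⁻¹ * (((f j : ℝ) + valF β (shf 1 (shf j f)) (q - j - 1)) / β) := by
    rw [div_eq_mul_inv]
    have hfj : (0:ℝ) ≤ f j := Nat.cast_nonneg _
    have hβi : (0:ℝ) ≤ β⁻¹ := inv_nonneg.2 hβ.le
    have hpi : (0:ℝ) ≤ (β ^ j)⁻¹ := inv_nonneg.2 h5.le
    nlinarith [mul_nonneg (mul_nonneg hpi (valF_nonneg hβ (shf 1 (shf j f)) (q - j - 1))) hβi]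
  linarith


section Z
variable {β : ℝ} {z : ℕ → ℕ}

lemma agree_open (z : ℕ → ℕ) (m : ℕ) : IsOpen {x : ℕ → ℕ | ∀ i < m, x i = z i} := by
  have : {x : ℕ → ℕ | ∀ i < m, x i = z i} =
      ⋂ i : Fin m, (fun x : ℕ → ℕ => x i.val) ⁻¹' {z i.val} := by
    ext x
    simp only [Set.mem_setOf_eq, Set.mem_iInter, Set.mem_preimage, Set.mem_singleton_iff]
    exact ⟨fun h i => h i.val i.isLt, fun h i hi => h ⟨i, hi⟩⟩
  rw [this]
  exact isOpen_iInter_of_finite fun i =>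
    (continuous_apply (i.val : ℕ)).isOpen_preimage _ (isOpen_discrete _)

lemma exists_agree (hβ : 1 < β)
    (hz : Filter.Tendsto (betaCode β) (nhdsWithin 1 (Set.Iio (1 : ℝ))) (nhds z))
    (m : ℕ) {a : ℝ} (ha : a < 1) :
    ∃ x : ℝ, a < x ∧ 0 ≤ x ∧ x < 1 ∧ ∀ i < m, betaCode β x i = z i := by
  have hmem : {x : ℕ → ℕ | ∀ i < m, x i = z i} ∈ nhds z :=
    (agree_open z m).mem_nhds (by intro i _; rfl)
  have h1 : ∀ᶠ x in nhdsWithin 1 (Set.Iio (1:ℝ)), ∀ i < m, betaCode β x i = z i :=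
    hz.eventually (Filter.eventually_of_mem hmem fun x hx => hx)
  have hb : max a 0 < 1 := by simp [ha, zero_lt_one]
  have hIoo : Set.Ioo (max a 0) 1 ∈ nhdsWithin 1 (Set.Iio (1:ℝ)) :=
    Ioo_mem_nhdsLT_of_mem ⟨hb, le_refl _⟩
  obtain ⟨x, hx1, hx2⟩ := (h1.and (Filter.eventually_of_mem hIoo fun x hx => hx)).exists
  exact ⟨x, lt_of_le_of_lt (le_max_left a 0) hx2.1,
    le_of_lt (lt_of_le_of_lt (le_max_right a 0) hx2.1), hx2.2, hx1⟩

lemma z_mem (hβ : 1 < β)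
    (hz : Filter.Tendsto (betaCode β) (nhdsWithin 1 (Set.Iio (1 : ℝ))) (nhds z)) :
    z ∈ betaShift β := by
  refine mem_closure_of_tendsto hz ?_
  have hIoo : Set.Ioo (0:ℝ) 1 ∈ nhdsWithin 1 (Set.Iio (1:ℝ)) :=
    Ioo_mem_nhdsLT_of_mem ⟨zero_lt_one, le_refl _⟩
  exact Filter.eventually_of_mem hIoo fun x hx => ⟨x, ⟨hx.1.le, hx.2⟩, rfl⟩

lemma z0_pos (hβ : 1 < β)
    (hz : Filter.Tendsto (betaCode β) (nhdsWithin 1 (Set.Iio (1 : ℝ))) (nhds z)) :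
    1 ≤ z 0 := by
  have hβ0 : (0:ℝ) < β := lt_trans zero_lt_one hβ
  have hinv : β⁻¹ < 1 := inv_lt_one_of_one_lt₀ hβ
  obtain ⟨x, hx1, hx2, hx3, hx4⟩ := exists_agree hβ hz 1 hinv
  have h0 : z 0 = ⌊β * x⌋₊ := by
    rw [← hx4 0 (by omega)]
    rfl
  rw [h0]
  have : (1:ℝ) ≤ β * x := by
    have : β * β⁻¹ < β * x := by
      apply mul_lt_mul_of_pos_left hx1 hβ0
    rw [mul_inv_cancel₀ hβ0.ne'] at this
    linarith
  exact Nat.le_floor (by exact_mod_cast this)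

lemma valF_code (hβ : 1 < β) :
    ∀ (M : ℕ) {x : ℝ}, x ∈ Set.Ico (0:ℝ) 1 →
      valF β (betaCode β x) M = x - (β ^ M)⁻¹ * (bT β)^[M] x := by
  intro M
  induction M with
  | zero => intro x _; simp [valF_zero]
  | succ M ih =>
    intro x hx
    have hβ0 : (0:ℝ) < β := lt_trans zero_lt_one hβ
    have hsh : shf 1 (betaCode β x) = betaCode β (bT β x) := by
      funext n; exact betaCode_succ β x n
    rw [valF_succ, hsh, ih (bT_mem β x)]
    have hfl : ((betaCode β x 0 : ℝ)) = β * x - bT β x := by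
      rw [betaCode_eq]
      simp only [Function.iterate_zero_apply]
      rw [bT_eq hβ0 hx.1]; ring
    rw [hfl]
    have hit : (bT β)^[M] (bT β x) = (bT β)^[M+1] x := by
      rw [Function.iterate_succ_apply]
    rw [hit, pow_succ]
    field_simp
    ring

lemma zUpper (hβ : 1 < β)
    (hz : Filter.Tendsto (betaCode β) (nhdsWithin 1 (Set.Iio (1 : ℝ))) (nhds z))
    (M : ℕ) : valF β z M ≤ 1 := by
  have hβ0 : (0:ℝ) < β := lt_trans zero_lt_one hβ
  obtain ⟨x, hx1, hx2, hx3, hx4⟩ := exists_agree hβ hz M (zero_lt_one)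
  have h1 : valF β z M = valF β (betaCode β x) M :=
    valF_congr (fun i hi => (hx4 i hi).symm)
  rw [h1, valF_code hβ M ⟨hx2, hx3⟩]
  have h2 : 0 ≤ (β ^ M)⁻¹ * (bT β)^[M] x :=
    mul_nonneg (inv_nonneg.2 (pow_pos hβ0 M).le) (iter_mem β ⟨hx2, hx3⟩ M).1
  linarith

end Z

section A
variable {β : ℝ} {z : ℕ → ℕ}

/-- admissibility of the first `m` digits of `f` with respect to `z`. -/
def AdmF (z f : ℕ → ℕ) (m : ℕ) : Prop :=
  ∀ i j, i + j < m → (∀ l < j, f (i + l) = z l) → f (i + j) ≤ z j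

lemma AdmF_shf {f : ℕ → ℕ} {m : ℕ} (h : AdmF z f m) (p : ℕ) :
    AdmF z (shf p f) (m - p) := by
  intro i j hij heq
  have h1 : (i + p) + j < m := by omega
  have h2 : ∀ l < j, f ((i + p) + l) = z l := by
    intro l hl
    have := heq l hl
    simpa only [shf, show i + l + p = i + p + l by omega] using this
  have := h (i + p) j h1 h2
  simpa only [shf, show i + j + p = i + p + j by omega] using this

lemma pow_inv_le {β : ℝ} (hβ : 1 < β) {a b : ℕ} (hab : a ≤ b) :
    (β ^ b)⁻¹ ≤ (β ^ a)⁻¹ := by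
  have hβ0 : (0:ℝ) < β := lt_trans zero_lt_one hβ
  exact inv_anti₀ (pow_pos hβ0 a) (pow_le_pow_right₀ hβ.le hab)

lemma zBound (hβ : 1 < β)
    (hz : Filter.Tendsto (betaCode β) (nhdsWithin 1 (Set.Iio (1 : ℝ))) (nhds z))
    {k : ℕ} (hk : ∀ n : ℕ, ∃ i : ℕ, n ≤ i ∧ i < n + k ∧ z i ≠ 0)
    (m : ℕ) : valF β z m ≤ 1 - (β ^ (m + k))⁻¹ := by
  have hβ0 : (0:ℝ) < β := lt_trans zero_lt_one hβ
  obtain ⟨m', hm1, hm2, hm3⟩ := hk m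
  have hsplit := valF_split hβ0 m z (m' + 1 - m)
  rw [show m + (m' + 1 - m) = m' + 1 by omega] at hsplit
  have hlow : (β ^ (m' - m + 1))⁻¹ ≤ valF β (shf m z) (m' + 1 - m) := by
    have h1 : m' - m < m' + 1 - m := by omega
    have h2 := valF_ge_single hβ0 (shf m z) h1
    have h3 : shf m z (m' - m) = z m' := by simp only [shf]; congr 1; omega
    rw [h3] at h2
    have h4 : (1:ℝ) ≤ (z m' : ℝ) := by exact_mod_cast Nat.one_le_iff_ne_zero.2 hm3
    have h5 : (0:ℝ) < (β ^ (m' - m + 1))⁻¹ := inv_pos.2 (pow_pos hβ0 _)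
    nlinarith
  have hup := zUpper hβ hz (m' + 1)
  have hpm : (0:ℝ) < (β ^ m)⁻¹ := inv_pos.2 (pow_pos hβ0 m)
  have hmul : (β ^ m)⁻¹ * (β ^ (m' - m + 1))⁻¹ = (β ^ (m' + 1))⁻¹ := by
    rw [← mul_inv, ← pow_add]
    congr 2
    omega
  have hfin : (β ^ (m + k))⁻¹ ≤ (β ^ (m' + 1))⁻¹ := pow_inv_le hβ (by omega)
  nlinarith [mul_le_mul_of_nonneg_left hlow hpm.le]

/-- Lemma A : value of an admissible word is at most `1 - β^{-(m+k)}`. -/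
lemma valA (hβ : 1 < β)
    (hz : Filter.Tendsto (betaCode β) (nhdsWithin 1 (Set.Iio (1 : ℝ))) (nhds z))
    {k : ℕ} (hk : ∀ n : ℕ, ∃ i : ℕ, n ≤ i ∧ i < n + k ∧ z i ≠ 0) :
    ∀ m f, AdmF z f m → valF β f m ≤ 1 - (β ^ (m + k))⁻¹ := by
  have hβ0 : (0:ℝ) < β := lt_trans zero_lt_one hβ
  intro m
  induction m using Nat.strong_induction_on with
  | _ m IH =>
    intro f hf
    by_cases hall : ∀ p < m, f p = z p
    · rw [valF_congr hall]
      exact zBound hβ hz hk m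
    · push_neg at hall
      classical
      have hex : ∃ p, p < m ∧ f p ≠ z p := by
        obtain ⟨p, h1, h2⟩ := hall
        exact ⟨p, h1, h2⟩
      set p := Nat.find hex with hpdef
      have hp1 : p < m := (Nat.find_spec hex).1
      have hp2 : f p ≠ z p := (Nat.find_spec hex).2
      have hagree : ∀ q < p, f q = z q := by
        intro q hq
        have h := Nat.find_min hex (show q < Nat.find hex by omega)
        by_contra hne
        exact h ⟨by omega, hne⟩
      have hfp : f p ≤ z p := by
        have := hf 0 p (by omega) (by intro l hl; rw [Nat.zero_add]; exact hagree l hl)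
        rwa [Nat.zero_add] at this
      have hfp' : f p + 1 ≤ z p := by omega
      have hsplit := valF_split hβ0 p f (m - p)
      rw [show p + (m - p) = m by omega] at hsplit
      have e1 : shf p f 0 = f p := by simp [shf]
      have e2 : shf 1 (shf p f) = shf (p+1) f := by rw [shf_shf, Nat.add_comm]
      have hsucc : valF β (shf p f) (m - p)
          = ((f p : ℝ) + valF β (shf (p+1) f) (m - p - 1)) / β := by
        obtain ⟨n, hn⟩ : ∃ n, m - p = n + 1 := ⟨m - p - 1, by omega⟩
        have hsucc' : valF β (shf p f) (n+1) = ((f p : ℝ) + valF β (shf (p+1) f) n) / β := by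
          rw [valF_succ, e1, e2]
        rw [← hn, show n = m - p - 1 by omega] at hsucc'
        exact hsucc'
      have hAdm' : AdmF z (shf (p+1) f) (m - p - 1) := by
        have := AdmF_shf hf (p+1)
        rwa [show m - (p+1) = m - p - 1 by omega] at this
      have hIH : valF β (shf (p+1) f) (m - p - 1) ≤ 1 - (β ^ ((m - p - 1) + k))⁻¹ :=
        IH (m - p - 1) (by omega) (shf (p+1) f) hAdm'
      have hzp1 : valF β z (p + 1) = valF β z p + (β ^ p)⁻¹ * ((z p : ℝ) / β) := by
        have h1 : valF β (shf p z) 1 = ((z p : ℝ)) / β := by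
          rw [valF_succ, valF_zero]
          simp [shf]
        have h2 := valF_split hβ0 p z 1
        rw [h1] at h2
        exact h2
      have hvp : valF β f p = valF β z p := valF_congr hagree
      have hD0 : 0 ≤ valF β (shf (p+1) f) (m - p - 1) := valF_nonneg hβ0 _ _
      have hPp : (0:ℝ) < (β ^ p)⁻¹ := inv_pos.2 (pow_pos hβ0 p)
      have hE1 : (0:ℝ) < (β ^ ((m - p - 1) + k))⁻¹ := inv_pos.2 (pow_pos hβ0 _)
      have hzup : valF β z (p+1) ≤ 1 := zUpper hβ hz (p+1)
      have hmulE : (β ^ p)⁻¹ * ((β ^ ((m - p - 1) + k))⁻¹ / β) = (β ^ (m + k))⁻¹ := by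
        rw [div_eq_mul_inv, ← mul_assoc, ← mul_inv, ← pow_add, ← mul_inv,
          show (β ^ (p + ((m - p - 1) + k)) * β) = β ^ (p + ((m - p - 1) + k)) * β ^ 1 by ring,
          ← pow_add]
        congr 2
        omega
      have hstep : valF β f m ≤
          valF β z p + (β ^ p)⁻¹ * (((z p : ℝ) - (β ^ ((m - p - 1) + k))⁻¹) / β) := by
        rw [hsplit, hsucc, hvp]
        gcongr
        have hc : (f p : ℝ) + 1 ≤ (z p : ℝ) := by exact_mod_cast hfp'
        linarith
      have hfinal : valF β z p + (β ^ p)⁻¹ * (((z p : ℝ) - (β ^ ((m - p - 1) + k))⁻¹) / β)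
          = valF β z (p+1) - (β ^ (m + k))⁻¹ := by
        rw [hzp1, ← hmulE, sub_div, mul_sub]
        ring
      linarith [hfinal ▸ hstep]

end A

section D
variable {β : ℝ} {z : ℕ → ℕ}

/-- Realization: if all suffix-values of the first `m` digits are `< 1`,
then `valF β f m` has coding starting with these digits. -/
lemma realize (hβ : 1 < β) :
    ∀ (m : ℕ) (f : ℕ → ℕ), (∀ j ≤ m, valF β (shf j f) (m - j) < 1) →
      ∀ i < m, betaCode β (valF β f m) i = f i := by
  have hβ0 : (0:ℝ) < β := lt_trans zero_lt_one hβ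
  intro m
  induction m with
  | zero => intro f _ i hi; omega
  | succ m IH =>
    intro f H i hi
    have hr0 : 0 ≤ valF β (shf 1 f) m := valF_nonneg hβ0 _ _
    have hr1 : valF β (shf 1 f) m < 1 := by
      have := H 1 (by omega)
      rwa [show m + 1 - 1 = m by omega] at this
    have hy : valF β f (m+1) = ((f 0 : ℝ) + valF β (shf 1 f) m) / β := valF_succ β f m
    have hby : β * valF β f (m+1) = (f 0 : ℝ) + valF β (shf 1 f) m := by
      rw [hy]; field_simp
    have hbT : bT β (valF β f (m+1)) = valF β (shf 1 f) m := by
      rw [bT, hby, add_comm]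
      rw [Int.fract_add_natCast]
      exact Int.fract_eq_self.2 ⟨hr0, hr1⟩
    match i with
    | 0 =>
      rw [betaCode_eq]
      simp only [Function.iterate_zero_apply]
      rw [hby, add_comm]
      rw [Nat.floor_add_natCast hr0]
      rw [Nat.floor_eq_zero.2 hr1, Nat.zero_add]
    | (i+1) =>
      rw [betaCode_succ, hbT]
      apply IH (shf 1 f) _ i (by omega)
      intro j hj
      have := H (j+1) (by omega)
      rw [shf_shf, show j + 1 = 1 + j by omega] at *
      rwa [show m + 1 - (1 + j) = m - j by omega] at this

/-- `z`-domination property. -/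
def Pz (z : ℕ → ℕ) (x : ℕ → ℕ) : Prop := ∀ m, (∀ i < m, x i = z i) → x m ≤ z m

lemma iter_mono (hβ : 1 < β) {x y : ℝ} (hy : y ∈ Set.Ico (0:ℝ) 1)
    (hx : x ∈ Set.Ico (0:ℝ) 1) (hyx : y ≤ x) :
    ∀ m, (∀ i < m, betaCode β y i = betaCode β x i) →
      (bT β)^[m] y ≤ (bT β)^[m] x := by
  have hβ0 : (0:ℝ) < β := lt_trans zero_lt_one hβ
  intro m
  induction m with
  | zero => intro _; exact hyx
  | succ m IH =>
    intro h
    have hm := IH (fun i hi => h i (by omega))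
    have hd : betaCode β y m = betaCode β x m := h m (by omega)
    have h1 : (bT β)^[m+1] y = β * (bT β)^[m] y - (betaCode β y m : ℝ) := by
      rw [Function.iterate_succ_apply', bT_eq hβ0 (iter_mem β hy m).1, betaCode_eq]
    have h2 : (bT β)^[m+1] x = β * (bT β)^[m] x - (betaCode β x m : ℝ) := by
      rw [Function.iterate_succ_apply', bT_eq hβ0 (iter_mem β hx m).1, betaCode_eq]
    rw [h1, h2, hd]
    have := mul_le_mul_of_nonneg_left hm hβ0.le
    linarith

lemma Pz_code (hβ : 1 < β)
    (hz : Filter.Tendsto (betaCode β) (nhdsWithin 1 (Set.Iio (1 : ℝ))) (nhds z))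
    {y : ℝ} (hy : y ∈ Set.Ico (0:ℝ) 1) : Pz z (betaCode β y) := by
  have hβ0 : (0:ℝ) < β := lt_trans zero_lt_one hβ
  intro m hag
  obtain ⟨x, hx1, hx2, hx3, hx4⟩ := exists_agree hβ hz (m+1) hy.2
  have hagree : ∀ i < m, betaCode β y i = betaCode β x i := by
    intro i hi
    rw [hag i hi, hx4 i (by omega)]
  have hmono := iter_mono hβ hy ⟨hx2, hx3⟩ hx1.le m hagree
  have : betaCode β y m ≤ betaCode β x m := by
    rw [betaCode_eq, betaCode_eq]
    exact Nat.floor_mono (mul_le_mul_of_nonneg_left hmono hβ0.le)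
  rw [← hx4 m (by omega)]
  exact this

lemma Pz_closed (z : ℕ → ℕ) : IsClosed {x : ℕ → ℕ | Pz z x} := by
  have heq : {x : ℕ → ℕ | Pz z x} =
      ⋂ m : ℕ, ((⋃ i : Fin m, {x : ℕ → ℕ | x i.val ≠ z i.val}) ∪ {x : ℕ → ℕ | x m ≤ z m}) := by
    ext x
    simp only [Set.mem_setOf_eq, Set.mem_iInter, Set.mem_union, Set.mem_iUnion]
    constructor
    · intro h m
      by_cases hc : ∀ i < m, x i = z i
      · exact Or.inr (h m hc)
      · push_neg at hc
        obtain ⟨i, hi, hne⟩ := hc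
        exact Or.inl ⟨⟨i, hi⟩, hne⟩
    · intro h m hag
      rcases h m with ⟨i, hne⟩ | hle
      · exact absurd (hag i.val i.isLt) hne
      · exact hle
  rw [heq]
  refine isClosed_iInter fun m => IsClosed.union ?_ ?_
  · refine isClosed_iUnion_of_finite fun i => ?_
    have : Continuous (fun x : ℕ → ℕ => x i.val) := continuous_apply _
    exact IsClosed.preimage this (isClosed_discrete {a : ℕ | a ≠ z i.val})
  · have : Continuous (fun x : ℕ → ℕ => x m) := continuous_apply _
    exact IsClosed.preimage this (isClosed_discrete {a : ℕ | a ≤ z m})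

lemma Pz_betaShift (hβ : 1 < β)
    (hz : Filter.Tendsto (betaCode β) (nhdsWithin 1 (Set.Iio (1 : ℝ))) (nhds z))
    {x : ℕ → ℕ} (hx : x ∈ betaShift β) : Pz z x := by
  have : betaShift β ⊆ {x : ℕ → ℕ | Pz z x} := by
    apply closure_minimal _ (Pz_closed z)
    rintro _ ⟨y, hy, rfl⟩
    exact Pz_code hβ hz hy
  exact this hx

lemma shf_continuous (p : ℕ) : Continuous (shf p : (ℕ → ℕ) → (ℕ → ℕ)) :=
  continuous_pi fun n => continuous_apply (n + p)

lemma shf_mem_betaShift {x : ℕ → ℕ} (hx : x ∈ betaShift β) (p : ℕ) :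
    shf p x ∈ betaShift β := by
  induction p with
  | zero => rwa [shf_zero]
  | succ p IH =>
    have h1 : shf (p+1) x = shf 1 (shf p x) := by rw [shf_shf, Nat.add_comm]
    rw [h1]
    -- shf 1 maps betaShift into betaShift
    have himg : shf 1 '' (betaCode β '' Set.Ico (0:ℝ) 1) ⊆ betaCode β '' Set.Ico (0:ℝ) 1 := by
      rintro _ ⟨_, ⟨y, hy, rfl⟩, rfl⟩
      refine ⟨bT β y, bT_mem β y, ?_⟩
      funext n
      exact (betaCode_succ β y n).symm
    have h2 : shf 1 (shf p x) ∈ closure (shf 1 '' (betaCode β '' Set.Ico (0:ℝ) 1)) :=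
      (image_closure_subset_closure_image (shf_continuous 1)) ⟨shf p x, IH, rfl⟩
    exact closure_mono himg h2

lemma langN_AdmF (hβ : 1 < β)
    (hz : Filter.Tendsto (betaCode β) (nhdsWithin 1 (Set.Iio (1 : ℝ))) (nhds z))
    {w : List ℕ} (hw : w ∈ langN (betaShift β)) :
    AdmF z (fun i => w.getD i 0) w.length := by
  obtain ⟨x, hx, hpre⟩ := hw
  have hval : ∀ i (h : i < w.length), x i = w.getD i 0 := by
    intro i h
    rw [List.getD_eq_getElem w 0 h]
    exact hpre ⟨i, h⟩
  intro i j hij heq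
  have hP := Pz_betaShift hβ hz (shf_mem_betaShift hx i) j
  have hpre2 : ∀ l < j, shf i x l = z l := by
    intro l hl
    have : x (l + i) = w.getD (i + l) 0 := by
      rw [show l + i = i + l by omega]
      exact hval (i + l) (by omega)
    rw [shf, this]
    exact heq l hl
  have := hP hpre2
  rw [shf, show j + i = i + j by omega, hval (i + j) hij] at this
  exact this

end D

section E
variable {β : ℝ} {z : ℕ → ℕ}

lemma concat_Adm (hz0 : 1 ≤ z 0) {k nv nw : ℕ}
    (hk : ∀ n : ℕ, ∃ i : ℕ, n ≤ i ∧ i < n + k ∧ z i ≠ 0)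
    {vf wf g : ℕ → ℕ} (hv : AdmF z vf nv) (hw : AdmF z wf nw)
    (hg1 : ∀ i < nv, g i = vf i)
    (hg2 : ∀ i, nv ≤ i → i < nv + k → g i = 0)
    (hg3 : ∀ i, nv + k ≤ i → g i = wf (i - (nv + k))) :
    AdmF z g (nv + k + nw) := by
  intro i j hij heq
  by_cases hA : i + j < nv
  · rw [hg1 _ hA]
    exact hv i j hA fun l hl => by rw [← hg1 (i + l) (by omega)]; exact heq l hl
  · by_cases hB : i + j < nv + k
    · rw [hg2 _ (by omega) hB]
      exact Nat.zero_le _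
    · -- i + j ≥ nv + k
      by_cases hC : nv + k ≤ i
      · rw [hg3 _ (by omega)]
        have h1 : (i - (nv + k)) + j < nw := by omega
        have := hw (i - (nv + k)) j h1 fun l hl => by
          rw [show i - (nv + k) + l = (i + l) - (nv + k) by omega,
            ← hg3 (i + l) (by omega)]
          exact heq l hl
        rwa [show i - (nv + k) + j = (i + j) - (nv + k) by omega] at this
      · by_cases hD : nv ≤ i
        · -- i in the zero block, j > 0, contradiction with z 0 ≥ 1
          exfalso
          have hj0 : 0 < j := by omega
          have := heq 0 hj0
          rw [Nat.add_zero, hg2 i hD (by omega)] at this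
          omega
        · -- i < nv : zero block inside the window, contradiction
          exfalso
          obtain ⟨m', h1, h2, h3⟩ := hk (nv - i)
          have hm'j : m' < j := by omega
          have := heq m' hm'j
          rw [hg2 (i + m') (by omega) (by omega)] at this
          exact h3 this.symm

lemma mem_langN (x : ℕ → ℕ) (hx : x ∈ betaShift β) (w : List ℕ)
    (h : ∀ i, i < w.length → x i = w.getD i 0) : w ∈ langN (betaShift β) :=
  ⟨x, hx, fun i => by
    rw [List.get_eq_getElem, ← List.getD_eq_getElem w 0 i.isLt]
    exact h i.val i.isLt⟩

lemma iter_bT_zero (β : ℝ) (n : ℕ) : (bT β)^[n] (0:ℝ) = 0 := by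
  induction n with
  | zero => rfl
  | succ n IH => rw [Function.iterate_succ_apply', IH, bT, mul_zero, Int.fract_zero]

lemma betaCode_zero (β : ℝ) (n : ℕ) : betaCode β 0 n = 0 := by
  have : betaCode β 0 n = ⌊β * (bT β)^[n] (0:ℝ)⌋₊ := rfl
  rw [this, iter_bT_zero, mul_zero, Nat.floor_zero]

end E
end StmtAux

open StmtAux in
/-- The `β`-shift has the specification property if and only if the
lexicographically maximal sequence `z` of `X_β` does not contain
arbitrarily long runs of consecutive `0`'s. -/
theorem stmt_9 (β : ℝ) (hβ : 1 < β) (z : ℕ → ℕ)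
    (hz : Filter.Tendsto (betaCode β) (nhdsWithin 1 (Set.Iio (1 : ℝ))) (nhds z)) :
    (∃ τ : ℕ, ∀ v ∈ langN (betaShift β), ∀ w ∈ langN (betaShift β),
      ∃ u ∈ langN (betaShift β), u.length ≤ τ ∧
        v ++ u ++ w ∈ langN (betaShift β)) ↔
    (∃ k : ℕ, ∀ n : ℕ, ∃ i : ℕ, n ≤ i ∧ i < n + k ∧ z i ≠ 0) := by
  have hβ0 : (0:ℝ) < β := lt_trans zero_lt_one hβ
  constructor
  · rintro ⟨τ, hspec⟩
    by_contra hcon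
    push_neg at hcon
    obtain ⟨n, hrun⟩ := hcon (τ + 1)
    have hzmem := z_mem hβ hz
    have hz0 := z0_pos hβ hz
    set v : List ℕ := List.ofFn (fun i : Fin n => z i.val) with hvdef
    have hvlen : v.length = n := by simp [hvdef]
    have hvget : ∀ i (h : i < n), v.getD i 0 = z i := by
      intro i h
      rw [List.getD_eq_getElem v 0 (by omega)]
      simp [hvdef]
    have hv : v ∈ langN (betaShift β) :=
      mem_langN z hzmem v fun i hi => (hvget i (by omega)).symm
    have hwl : [z 0] ∈ langN (betaShift β) :=
      mem_langN z hzmem [z 0] fun i hi => by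
        have h0 : i = 0 := by simpa using hi
        subst h0
        rfl
    obtain ⟨u, _, hulen, hmem⟩ := hspec v hv [z 0] hwl
    obtain ⟨x, hx, hpre⟩ := hmem
    have hP := Pz_betaShift hβ hz hx
    have hLlen : (v ++ u ++ [z 0]).length = n + u.length + 1 := by
      simp [hvlen]
      omega
    have hxval : ∀ i (h : i < n + u.length + 1), x i = (v ++ u ++ [z 0])[i]'(by omega) := by
      intro i h
      have := hpre ⟨i, by omega⟩
      rwa [List.get_eq_getElem] at this
    have hxv : ∀ i, i < n → x i = z i := by
      intro i hi
      have hb : i < v.length := by omega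
      have hb2 : i < (v ++ u).length := by simp; omega
      rw [hxval i (by omega), List.getElem_append_left hb2, List.getElem_append_left hb]
      simp [hvdef]
    have key : ∀ i, i < n + u.length → x i = z i := by
      intro i
      induction i using Nat.strong_induction_on with
      | _ i IHi =>
        intro hi
        by_cases hin : i < n
        · exact hxv i hin
        · have h0 : z i = 0 := hrun i (by omega) (by omega)
          have := hP i fun l hl => IHi l hl (by omega)
          omega
    have hfin := hP (n + u.length) fun l hl => key l hl
    have hzl : z (n + u.length) = 0 := hrun _ (by omega) (by omega)
    have hxl : x (n + u.length) = z 0 := by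
      rw [hxval (n + u.length) (by omega)]
      rw [List.getElem_append_right (by simp [hvlen] : (v ++ u).length ≤ n + u.length)]
      simp [hvlen]
    omega
  · rintro ⟨k, hk⟩
    refine ⟨k, ?_⟩
    intro v hv w hw
    have hz0 := z0_pos hβ hz
    have hAv := langN_AdmF hβ hz hv
    have hAw := langN_AdmF hβ hz hw
    set nv := v.length with hnv
    set nw := w.length with hnw
    set M := nv + k + nw with hM
    set g : ℕ → ℕ := fun i =>
      if i < nv then v.getD i 0 else if i < nv + k then 0 else w.getD (i - (nv + k)) 0
      with hgdef
    have hg : AdmF z g M := by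
      refine concat_Adm hz0 hk hAv hAw ?_ ?_ ?_
      · intro i hi; simp [hgdef, hi]
      · intro i h1 h2; simp [hgdef, h2]; omega
      · intro i h1
        simp only [hgdef]
        rw [if_neg (by omega : ¬ i < nv), if_neg (by omega : ¬ i < nv + k)]
    have hvalbnd : ∀ j ≤ M, valF β (shf j g) (M - j) < 1 := by
      intro j hj
      have h1 := valA hβ hz hk (M - j) (shf j g) (AdmF_shf hg j)
      have h2 : (0:ℝ) < (β ^ ((M - j) + k))⁻¹ := inv_pos.2 (pow_pos hβ0 _)
      linarith
    set y := valF β g M with hy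
    have hy0 : 0 ≤ y := valF_nonneg hβ0 g M
    have hy1 : y < 1 := by
      have := hvalbnd 0 (by omega)
      rwa [shf_zero, Nat.sub_zero] at this
    have hcode : ∀ i < M, betaCode β y i = g i := realize hβ M g hvalbnd
    have hxmem : betaCode β y ∈ betaShift β :=
      subset_closure ⟨y, ⟨hy0, hy1⟩, rfl⟩
    refine ⟨List.replicate k 0, ?_, by simp, ?_⟩
    · refine mem_langN (betaCode β 0)
        (subset_closure ⟨0, ⟨le_refl _, zero_lt_one⟩, rfl⟩) _ ?_
      intro i hi
      rw [betaCode_zero, List.getD_eq_getElem _ 0 hi, List.getElem_replicate]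
    · have hLlen : (v ++ List.replicate k 0 ++ w).length = M := by
        simp only [List.length_append, List.length_replicate, hM, hnv, hnw]
        try omega
      refine mem_langN (betaCode β y) hxmem _ ?_
      intro i hi
      rw [hLlen] at hi
      rw [hcode i hi, List.getD_eq_getElem _ 0 (by rw [hLlen]; exact hi)]
      by_cases h1 : i < nv
      · have hb : i < v.length := by omega
        have hb2 : i < (v ++ List.replicate k 0).length := by
          simp only [List.length_append, List.length_replicate]; omega
        rw [List.getElem_append_left hb2, List.getElem_append_left hb]
        simp only [hgdef, if_pos h1]
        exact List.getD_eq_getElem v 0 hb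
      · by_cases h2 : i < nv + k
        · have hb2 : i < (v ++ List.replicate k 0).length := by
            simp only [List.length_append, List.length_replicate]; omega
          have hb : v.length ≤ i := by omega
          rw [List.getElem_append_left hb2, List.getElem_append_right hb,
            List.getElem_replicate]
          simp [hgdef, h1, h2]
        · have hb : (v ++ List.replicate k 0).length ≤ i := by
            simp only [List.length_append, List.length_replicate]; omega
          rw [List.getElem_append_right hb]
          simp only [hgdef, if_neg h1, if_neg h2]
          rw [show i - (nv + k) = i - (v ++ List.replicate k 0).length by
            simp only [List.length_append, List.length_replicate]
            try omega]
          exact List.getD_eq_getElem w 0 (by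
            simp only [List.length_append, List.length_replicate] at hb ⊢
            try omega)
end

section
/- Let f : X → X be continuous on a compact metric space and suppose there exist δ_1 > 0, δ_2 ≥ 0, χ ∈ (0,1), τ ∈ ℕ such that for every pair of orbit segments (x_1, n_1), (x_2, n_2) ∈ X × ℕ there are t ∈ {0,...,τ} and y ∈ X with d(f^k y, f^k x_1) ≤ δ_1 χ^{n_1 - k} for 0 ≤ k < n_1 and d_{n_2}(f^{n_1+t} y, x_2) ≤ δ_2. Then (X, f) has the specification property at scale δ_2 + δ_1/(1−χ) with gap size τ: for any finite list (x_1,n_1),...,(x_k,n_k) of orbit segments there exist times 0 = T_1 < ... < T_k with T_{i+1} − (T_i + n_i) ∈ [0,τ] and a point y with f^{T_i}(y) ∈ B_{n_i}(x_i, δ_2 + δ_1/(1−χ)) for all i. -/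
/-- One-step gluing implies specification: if any two orbit segments can be
glued with exponentially decaying error `δ₁ χ^{n₁−k}` on the first segment
and error `δ₂` on the second, then `(X,f)` has the specification property
at scale `δ₂ + δ₁/(1−χ)` with gap size `τ`. -/
theorem stmt_11 {X : Type*} [MetricSpace X] [CompactSpace X]
    (f : X → X) (hf : Continuous f)
    (δ₁ δ₂ χ : ℝ) (τ : ℕ)
    (hδ₁ : 0 < δ₁) (hδ₂ : 0 ≤ δ₂) (hχ₀ : 0 < χ) (hχ₁ : χ < 1)
    (honestep : ∀ (x₁ x₂ : X) (n₁ n₂ : ℕ), ∃ t ≤ τ, ∃ y : X,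
      (∀ k < n₁, dist (f^[k] y) (f^[k] x₁) ≤ δ₁ * χ ^ (n₁ - k)) ∧
      (∀ m < n₂, dist (f^[n₁ + t + m] y) (f^[m] x₂) ≤ δ₂)) :
    ∀ (k : ℕ) (x : ℕ → X) (nn : ℕ → ℕ), ∃ (T : ℕ → ℕ) (y : X),
      T 0 = 0 ∧
      (∀ i : ℕ, i + 1 < k →
        T i + nn i ≤ T (i + 1) ∧ T (i + 1) ≤ T i + nn i + τ) ∧
      (∀ i < k, ∀ m < nn i,
        dist (f^[T i + m] y) (f^[m] (x i)) < δ₂ + δ₁ / (1 - χ)) := by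
  intro k x nn
  -- extract choice functions from the one-step gluing hypothesis
  choose t ht yg hshadow hmatch using honestep
  -- recursive construction of (point, starting time) pairs
  set P : ℕ → X × ℕ := fun n => Nat.rec (x 0, 0)
    (fun i p =>
      if nn (i+1) = 0 then (p.1, p.2 + nn i)
      else (yg p.1 (x (i+1)) (p.2 + nn i) (nn (i+1)),
            p.2 + nn i + t p.1 (x (i+1)) (p.2 + nn i) (nn (i+1)))) n with hPdef
  have hP0 : P 0 = (x 0, 0) := rfl
  have hPS : ∀ i, P (i+1) =
      if nn (i+1) = 0 then ((P i).1, (P i).2 + nn i)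
      else (yg (P i).1 (x (i+1)) ((P i).2 + nn i) (nn (i+1)),
            (P i).2 + nn i + t (P i).1 (x (i+1)) ((P i).2 + nn i) (nn (i+1))) :=
    fun i => rfl
  set T : ℕ → ℕ := fun i => (P i).2 with hT
  set y : ℕ → X := fun i => (P i).1 with hy
  set N : ℕ → ℕ := fun i => T i + nn i with hN
  -- time increments
  have hTstep : ∀ i, T i + nn i ≤ T (i+1) ∧ T (i+1) ≤ T i + nn i + τ := by
    intro i
    by_cases h : nn (i+1) = 0
    · constructor
      · simp [hT, hPS i, h]
      · simp [hT, hPS i, h]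
    · have hT1 : T (i+1) = T i + nn i + t (P i).1 (x (i+1)) ((P i).2 + nn i) (nn (i+1)) := by
        simp [hT, hPS i, h]
      constructor
      · rw [hT1]; exact Nat.le_add_right _ _
      · rw [hT1]; exact Nat.add_le_add_left (ht _ _ _ _) _
  -- N is monotone
  have hNstep : ∀ i, N i ≤ N (i+1) := by
    intro i
    by_cases h : nn (i+1) = 0
    · simp [hN, hT, hPS i, h]
    · have hT1 : T (i+1) = T i + nn i + t (P i).1 (x (i+1)) ((P i).2 + nn i) (nn (i+1)) := by
        simp [hT, hPS i, h]
      simp only [hN, hT1]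
      omega
  have hNmono : ∀ j i, j ≤ i → N j ≤ N i := by
    intro j i hji
    exact monotone_nat_of_le_succ hNstep hji
  have h1χ : (0:ℝ) < 1 - χ := by linarith
  have hχnn : (0:ℝ) ≤ χ := le_of_lt hχ₀
  -- main invariant
  have main : ∀ i, ∀ j ≤ i, ∀ m < nn j,
      dist (f^[T j + m] (y i)) (f^[m] (x j))
        ≤ δ₂ + δ₁ * ∑ ℓ ∈ Finset.Icc 1 (N i - N j), χ ^ ℓ := by
    intro i
    induction i with
    | zero =>
      intro j hj m hm
      interval_cases j
      have : dist (f^[T 0 + m] (y 0)) (f^[m] (x 0)) = 0 := by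
        simp [hT, hy, hP0]
      rw [this]
      have : (0:ℝ) ≤ ∑ ℓ ∈ Finset.Icc 1 (N 0 - N 0), χ ^ ℓ :=
        Finset.sum_nonneg fun ℓ _ => pow_nonneg hχnn ℓ
      nlinarith
    | succ i ih =>
      intro j hj m hm
      by_cases h : nn (i+1) = 0
      · -- skip case
        have hyeq : y (i+1) = y i := by simp [hy, hPS i, h]
        have hNeq : N (i+1) = N i := by simp [hN, hT, hPS i, h]
        rcases Nat.lt_or_ge j (i+1) with hj' | hj'
        · rw [hyeq, hNeq]
          exact ih j (Nat.lt_succ_iff.mp hj') m hm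
        · have : j = i + 1 := le_antisymm hj hj'
          subst this
          omega
      · -- glue case
        set z := (P i).1 with hz
        set t' := t (P i).1 (x (i+1)) ((P i).2 + nn i) (nn (i+1)) with ht'
        have hy1 : y (i+1) = yg (P i).1 (x (i+1)) ((P i).2 + nn i) (nn (i+1)) := by
          simp [hy, hPS i, h]
        have hT1 : T (i+1) = T i + nn i + t' := by simp [hT, hPS i, h, ht']
        have hNiTnn : (P i).2 + nn i = N i := rfl
        rcases Nat.lt_or_ge j (i+1) with hj' | hj'
        · -- earlier segment: triangle inequality
          have hjle : j ≤ i := Nat.lt_succ_iff.mp hj'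
          have hNjNi : N j ≤ N i := hNmono j i hjle
          have hk : T j + m < N i := by
            have : T j + m < N j := by simp only [hN]; omega
            omega
          have hsh := hshadow (P i).1 (x (i+1)) ((P i).2 + nn i) (nn (i+1)) (T j + m)
            (by rw [hNiTnn]; exact hk)
          rw [hNiTnn] at hsh
          have hih := ih j hjle m hm
          have htri : dist (f^[T j + m] (y (i+1))) (f^[m] (x j))
              ≤ dist (f^[T j + m] (y (i+1))) (f^[T j + m] (y i))
                + dist (f^[T j + m] (y i)) (f^[m] (x j)) := dist_triangle _ _ _
          have hshy : dist (f^[T j + m] (y (i+1))) (f^[T j + m] (y i))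
              ≤ δ₁ * χ ^ (N i - (T j + m)) := by
            rw [hy1]; exact hsh
          -- exponent estimate
          have hexp : χ ^ (N i - (T j + m)) ≤ χ ^ (N i - N j + 1) := by
            apply pow_le_pow_of_le_one hχnn (le_of_lt hχ₁)
            have : T j + m + 1 ≤ N j := by simp only [hN]; omega
            omega
          have hsum1 : δ₂ + δ₁ * ∑ ℓ ∈ Finset.Icc 1 (N i - N j), χ ^ ℓ
                + δ₁ * χ ^ (N i - N j + 1)
              = δ₂ + δ₁ * ∑ ℓ ∈ Finset.Icc 1 (N i - N j + 1), χ ^ ℓ := by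
            rw [Finset.sum_Icc_succ_top (by omega : 1 ≤ N i - N j + 1)]
            ring
          have hNsucc : N i - N j + 1 ≤ N (i+1) - N j := by
            have hN1 : N i + 1 ≤ N (i+1) := by
              have : T (i+1) + nn (i+1) = N i + t' + nn (i+1) := by
                simp only [hN] at *; omega
              simp only [hN, this]
              omega
            omega
          have hsub : Finset.Icc 1 (N i - N j + 1) ⊆ Finset.Icc 1 (N (i+1) - N j) := by
            apply Finset.Icc_subset_Icc_right hNsucc
          have hsum2 : ∑ ℓ ∈ Finset.Icc 1 (N i - N j + 1), χ ^ ℓ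
              ≤ ∑ ℓ ∈ Finset.Icc 1 (N (i+1) - N j), χ ^ ℓ :=
            Finset.sum_le_sum_of_subset_of_nonneg hsub
              (fun ℓ _ _ => pow_nonneg hχnn ℓ)
          calc dist (f^[T j + m] (y (i+1))) (f^[m] (x j))
              ≤ δ₁ * χ ^ (N i - (T j + m))
                + (δ₂ + δ₁ * ∑ ℓ ∈ Finset.Icc 1 (N i - N j), χ ^ ℓ) := by
                  linarith [htri, hshy, hih]
            _ ≤ δ₁ * χ ^ (N i - N j + 1)
                + (δ₂ + δ₁ * ∑ ℓ ∈ Finset.Icc 1 (N i - N j), χ ^ ℓ) := by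
                  have := mul_le_mul_of_nonneg_left hexp (le_of_lt hδ₁)
                  linarith
            _ = δ₂ + δ₁ * ∑ ℓ ∈ Finset.Icc 1 (N i - N j + 1), χ ^ ℓ := by
                  linarith [hsum1]
            _ ≤ δ₂ + δ₁ * ∑ ℓ ∈ Finset.Icc 1 (N (i+1) - N j), χ ^ ℓ := by
                  nlinarith [hsum2]
        · -- new segment j = i+1
          have hji : j = i + 1 := le_antisymm hj hj'
          subst hji
          have hm' := hmatch (P i).1 (x (i+1)) ((P i).2 + nn i) (nn (i+1)) m hm
          have hidx : T (i+1) + m = (P i).2 + nn i + t' + m := by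
            rw [hT1]
          have hd : dist (f^[T (i+1) + m] (y (i+1))) (f^[m] (x (i+1))) ≤ δ₂ := by
            rw [hy1, hidx]; exact hm'
          have hsnn : (0:ℝ) ≤ ∑ ℓ ∈ Finset.Icc 1 (N (i+1) - N (i+1)), χ ^ ℓ :=
            Finset.sum_nonneg fun ℓ _ => pow_nonneg hχnn ℓ
          nlinarith
  -- geometric series bound
  have hgeom : ∀ L : ℕ, δ₁ * ∑ ℓ ∈ Finset.Icc 1 L, χ ^ ℓ < δ₁ / (1 - χ) := by
    intro L
    have hsum : ∑ ℓ ∈ Finset.Icc 1 L, χ ^ ℓ = χ * ∑ ℓ ∈ Finset.range L, χ ^ ℓ := by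
      rw [Finset.mul_sum, ← Finset.Ico_add_one_right_eq_Icc, Finset.sum_Ico_eq_sum_range]
      exact Finset.sum_congr rfl fun i _ => by rw [pow_add, pow_one]
    have hmul := geom_sum_mul χ L
    have hχL : (0:ℝ) ≤ χ ^ L := pow_nonneg hχnn L
    have hχL1 : χ ^ L ≤ 1 := pow_le_one₀ hχnn (le_of_lt hχ₁)
    have hS' : (1 - χ) * ∑ ℓ ∈ Finset.Icc 1 L, χ ^ ℓ = χ * (1 - χ ^ L) := by
      rw [hsum]; nlinarith [hmul]
    rw [lt_div_iff₀ h1χ]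
    nlinarith [hS', mul_pos hδ₁ hχ₀]
  refine ⟨T, y (k - 1), ?_, ?_, ?_⟩
  · simp [hT, hP0]
  · intro i _; exact hTstep i
  · intro i hik m hm
    have hik' : i ≤ k - 1 := by omega
    have := main (k-1) i hik' m hm
    calc dist (f^[T i + m] (y (k-1))) (f^[m] (x i))
        ≤ δ₂ + δ₁ * ∑ ℓ ∈ Finset.Icc 1 (N (k-1) - N i), χ ^ ℓ := this
      _ < δ₂ + δ₁ / (1 - χ) := by linarith [hgeom (N (k-1) - N i)]
end

section
/- Let f : X → X be continuous on a compact metric space, topologically transitive, uniformly expanding at scale δ (d(fx,fy) ≥ e^λ d(x,y) whenever d(x,y) < δ for some λ > 0) and locally onto at scale δ (f(B(x,δ)) ⊇ B(fx,δ) for all x). Then f^n(B_n(x,δ)) ⊇ B(f^n x, δ) for all x and n, and (X, f) has the specification property at scale δ/(1−e^{-λ}). -/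
open Function Metric Set

/-- A topologically transitive, uniformly expanding, locally onto map
satisfies `f^n(B_n(x,δ)) ⊇ B(f^n x, δ)` and has the specification property
at scale `δ/(1−e^{-λ})`. -/
theorem stmt_12 {X : Type*} [MetricSpace X] [CompactSpace X] [Nonempty X]
    (f : X → X) (hf : Continuous f) (δ lam : ℝ) (hδ : 0 < δ) (hlam : 0 < lam)
    (htrans : ∀ U V : Set X, IsOpen U → IsOpen V → U.Nonempty → V.Nonempty →
      ∃ n : ℕ, (U ∩ f^[n] ⁻¹' V).Nonempty)
    (hexp : ∀ x y : X, dist x y < δ → Real.exp lam * dist x y ≤ dist (f x) (f y))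
    (honto : ∀ x : X, Metric.ball (f x) δ ⊆ f '' Metric.ball x δ) :
    (∀ (x : X) (n : ℕ), Metric.ball (f^[n] x) δ ⊆
      f^[n] '' {y | ∀ k < n, dist (f^[k] y) (f^[k] x) < δ}) ∧
    ∃ τ : ℕ, ∀ (k : ℕ) (x : ℕ → X) (nn : ℕ → ℕ), ∃ (T : ℕ → ℕ) (y : X),
      T 0 = 0 ∧
      (∀ i : ℕ, i + 1 < k →
        T i + nn i ≤ T (i + 1) ∧ T (i + 1) ≤ T i + nn i + τ) ∧
      (∀ i < k, ∀ m < nn i,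
        dist (f^[T i + m] y) (f^[m] (x i)) < δ / (1 - Real.exp (-lam))) := by
  have hq0 : (0:ℝ) < Real.exp (-lam) := Real.exp_pos _
  have hq1 : Real.exp (-lam) < 1 := by
    rw [Real.exp_lt_one_iff]; linarith
  -- The pullback lemma
  have pull : ∀ (n : ℕ) (x z : X), dist z (f^[n] x) < δ →
      ∃ y, f^[n] y = z ∧ ∀ k ≤ n,
        dist (f^[k] y) (f^[k] x) ≤ Real.exp (-lam) ^ (n - k) * dist z (f^[n] x) := by
    intro n
    induction n with
    | zero =>
      intro x z h
      refine ⟨z, rfl, ?_⟩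
      intro k hk
      interval_cases k
      simp
    | succ n ih =>
      intro x z hz
      have h1 : z ∈ ball (f (f^[n] x)) δ := by
        rw [mem_ball, ← Function.iterate_succ_apply' f n x]; exact hz
      obtain ⟨w, hw, hfw⟩ := honto (f^[n] x) h1
      rw [mem_ball] at hw
      have h2 : Real.exp lam * dist w (f^[n] x) ≤ dist z (f^[n+1] x) := by
        rw [Function.iterate_succ_apply' f n x, ← hfw]
        exact hexp w (f^[n] x) hw
      have h3 : dist w (f^[n] x) ≤ Real.exp (-lam) * dist z (f^[n+1] x) := by
        have := mul_le_mul_of_nonneg_left h2 hq0.le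
        rw [← mul_assoc, ← Real.exp_add] at this
        simpa using this
      have h4 : dist w (f^[n] x) < δ := by
        have : Real.exp (-lam) * dist z (f^[n+1] x) ≤ dist z (f^[n+1] x) :=
          mul_le_of_le_one_left dist_nonneg hq1.le
        linarith
      obtain ⟨y, hy, hb⟩ := ih x w h4
      refine ⟨y, ?_, ?_⟩
      · rw [Function.iterate_succ_apply' f n y, hy, hfw]
      · intro k hk
        rcases eq_or_lt_of_le hk with heq | hk'
        case inr =>
          have hk'' : k ≤ n := Nat.lt_succ_iff.mp hk'
          calc dist (f^[k] y) (f^[k] x)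
              ≤ Real.exp (-lam) ^ (n - k) * dist w (f^[n] x) := hb k hk''
            _ ≤ Real.exp (-lam) ^ (n - k) * (Real.exp (-lam) * dist z (f^[n+1] x)) :=
                mul_le_mul_of_nonneg_left h3 (pow_nonneg hq0.le _)
            _ = Real.exp (-lam) ^ (n + 1 - k) * dist z (f^[n+1] x) := by
                rw [Nat.succ_sub hk'', pow_succ, mul_assoc]
        case inl =>
          subst heq
          have : f^[n+1] y = z := by
              rw [Function.iterate_succ_apply' f n y, hy, hfw]
          rw [this]
          simp
  have pow_le : ∀ r : ℕ, Real.exp (-lam) ^ r ≤ 1 := fun r =>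
    pow_le_one₀ hq0.le hq1.le
  constructor
  · -- Part 1
    intro x n z hz
    rw [mem_ball] at hz
    obtain ⟨y, hy, hb⟩ := pull n x z hz
    refine ⟨y, ?_, hy⟩
    intro k hk
    calc dist (f^[k] y) (f^[k] x)
        ≤ Real.exp (-lam) ^ (n - k) * dist z (f^[n] x) := hb k hk.le
      _ ≤ 1 * dist z (f^[n] x) :=
          mul_le_mul_of_nonneg_right (pow_le _) dist_nonneg
      _ < δ := by rw [one_mul]; exact hz
  · -- Part 2
    have hρ : (0:ℝ) < δ/4 := by linarith
    obtain ⟨s, hs⟩ := isCompact_univ.elim_finite_subcover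
      (fun c : X => ball c (δ/4)) (fun c => isOpen_ball)
      (fun p _ => mem_iUnion.mpr ⟨p, mem_ball_self hρ⟩)
    have key : ∀ c d : X, ∃ (n : ℕ) (p : X), dist p c < δ/4 ∧ dist (f^[n] p) d < δ/4 := by
      intro c d
      obtain ⟨n, p, hp⟩ := htrans (ball c (δ/4)) (ball d (δ/4)) isOpen_ball isOpen_ball
        ⟨c, mem_ball_self hρ⟩ ⟨d, mem_ball_self hρ⟩
      exact ⟨n, p, hp.1, hp.2⟩
    choose N P hP1 hP2 using key
    set τ : ℕ := s.sup (fun c => s.sup (N c)) with hτdef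
    have hB : ∀ a b : X, ∃ t ≤ τ, ∃ p, dist p a < δ/2 ∧ dist (f^[t] p) b < δ/2 := by
      intro a b
      have ha := hs (mem_univ a)
      have hb := hs (mem_univ b)
      simp only [mem_iUnion, exists_prop] at ha hb
      obtain ⟨c, hc, hac⟩ := ha
      obtain ⟨d, hd, hbd⟩ := hb
      rw [mem_ball] at hac hbd
      refine ⟨N c d, ?_, P c d, ?_, ?_⟩
      · exact le_trans (Finset.le_sup hd) (Finset.le_sup (f := fun c => s.sup (N c)) hc)
      · calc dist (P c d) a ≤ dist (P c d) c + dist c a := dist_triangle _ _ _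
          _ < δ/4 + δ/4 := by
              have := hP1 c d
              rw [dist_comm a c] at hac
              linarith
          _ = δ/2 := by ring
      · calc dist (f^[N c d] (P c d)) b ≤ dist (f^[N c d] (P c d)) d + dist d b :=
            dist_triangle _ _ _
          _ < δ/4 + δ/4 := by
              have := hP2 c d
              rw [dist_comm b d] at hbd
              linarith
          _ = δ/2 := by ring
    -- main induction: shadowing at scale δ
    have main : ∀ (k : ℕ) (x : ℕ → X) (nn : ℕ → ℕ), ∃ (T : ℕ → ℕ) (y : X),
        T 0 = 0 ∧
        (∀ i : ℕ, i + 1 < k →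
          T i + nn i ≤ T (i + 1) ∧ T (i + 1) ≤ T i + nn i + τ) ∧
        (∀ i < k, ∀ m < nn i, dist (f^[T i + m] y) (f^[m] (x i)) < δ) := by
      intro k
      induction k with
      | zero =>
        intro x nn
        exact ⟨fun _ => 0, x 0, rfl, fun i hi => by omega, fun i hi => by omega⟩
      | succ k ih =>
        intro x nn
        obtain ⟨T', y', hT0, hgap, hsh⟩ := ih (fun i => x (i+1)) (fun i => nn (i+1))
        obtain ⟨t, ht, p, hpa, hpb⟩ := hB (f^[nn 0] (x 0)) y'
        have hyp : dist y' (f^[t] p) < δ := by rw [dist_comm]; linarith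
        obtain ⟨w, hw, hwb⟩ := pull t p y' hyp
        have hw0 : dist w p < δ/2 := by
          have := hwb 0 (Nat.zero_le _)
          simp only [Function.iterate_zero_apply, Nat.sub_zero] at this
          calc dist w p ≤ Real.exp (-lam) ^ t * dist y' (f^[t] p) := this
            _ ≤ 1 * dist y' (f^[t] p) :=
                mul_le_mul_of_nonneg_right (pow_le _) dist_nonneg
            _ < δ/2 := by rw [one_mul, dist_comm]; linarith
        have hwa : dist w (f^[nn 0] (x 0)) < δ := by
          calc dist w (f^[nn 0] (x 0)) ≤ dist w p + dist p (f^[nn 0] (x 0)) :=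
              dist_triangle _ _ _
            _ < δ/2 + δ/2 := by linarith
            _ = δ := by ring
        obtain ⟨y, hy, hyb⟩ := pull (nn 0) (x 0) w hwa
        have hglue : f^[nn 0 + t] y = y' := by
          rw [add_comm, Function.iterate_add_apply, hy, hw]
        refine ⟨fun i => Nat.rec 0 (fun j _ => nn 0 + t + T' j) i, y, rfl, ?_, ?_⟩
        · intro i hi
          match i with
          | 0 =>
            show 0 + nn 0 ≤ nn 0 + t + T' 0 ∧ nn 0 + t + T' 0 ≤ 0 + nn 0 + τ
            rw [hT0]
            omega
          | j+1 =>
            have hj : j + 1 < k := by omega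
            have := hgap j hj
            show (nn 0 + t + T' j) + nn (j+1) ≤ nn 0 + t + T' (j+1) ∧
              nn 0 + t + T' (j+1) ≤ (nn 0 + t + T' j) + nn (j+1) + τ
            omega
        · intro i hi m hm
          match i with
          | 0 =>
            show dist (f^[0 + m] y) (f^[m] (x 0)) < δ
            rw [Nat.zero_add]
            calc dist (f^[m] y) (f^[m] (x 0))
                ≤ Real.exp (-lam) ^ (nn 0 - m) * dist w (f^[nn 0] (x 0)) := hyb m hm.le
              _ ≤ 1 * dist w (f^[nn 0] (x 0)) :=
                  mul_le_mul_of_nonneg_right (pow_le _) dist_nonneg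
              _ < δ := by rw [one_mul]; exact hwa
          | j+1 =>
            have hj : j < k := by omega
            have horb : f^[(nn 0 + t + T' j) + m] y = f^[T' j + m] y' := by
              have e : nn 0 + t + T' j + m = (T' j + m) + (nn 0 + t) := by ring
              rw [e, Function.iterate_add_apply, hglue]
            show dist (f^[(nn 0 + t + T' j) + m] y) (f^[m] (x (j+1))) < δ
            rw [horb]
            exact hsh j hj m hm
    obtain ⟨T, y, h0, hg, hsh⟩ := main 0 (fun _ => Classical.arbitrary X) (fun _ => 0)
    refine ⟨τ, ?_⟩
    intro k x nn
    obtain ⟨T, y, h0, hg, hsh⟩ := main k x nn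
    refine ⟨T, y, h0, hg, ?_⟩
    intro i hi m hm
    have hδε : δ ≤ δ / (1 - Real.exp (-lam)) := by
      rw [le_div_iff₀ (by linarith)]
      nlinarith
    exact lt_of_lt_of_le (hsh i hi m hm) hδε
end

section
/- Let (X, σ) be a shift space with more than one point having strong specification with gap size τ: for all words v, w in the language L there is u ∈ L_τ with vuw ∈ L. Then h_top(X) ≥ (log 2)/(n + τ) > 0, where n is any length such that #L_n ≥ 2. In particular, any nontrivial shift with strong specification has positive topological entropy. -/
open Filter

set_option linter.unusedVariables false

lemma finite_len {A : Type*} [Fintype A] (m : ℕ) : {l : List A | l.length = m}.Finite := by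
  apply (Set.finite_range (fun v : Fin m → A => List.ofFn v)).subset
  rintro l (hl : l.length = m)
  refine ⟨fun i => l.get (Fin.cast hl.symm i), ?_⟩
  apply List.ext_get (by simp [hl])
  intro i h1 h2
  simp [List.get_ofFn]

noncomputable def pick {A : Type*} (X : Set (ℕ → A)) (τ : ℕ)
    (hspec : ∀ v ∈ langL X, ∀ w ∈ langL X,
      ∃ u ∈ langL X, u.length = τ ∧ v ++ u ++ w ∈ langL X)
    (v w : List A) : List A := by
  classical
  exact if h : v ∈ langL X ∧ w ∈ langL X then (hspec v h.1 w h.2).choose else []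

lemma pick_spec {A : Type*} (X : Set (ℕ → A)) (τ : ℕ)
    (hspec : ∀ v ∈ langL X, ∀ w ∈ langL X,
      ∃ u ∈ langL X, u.length = τ ∧ v ++ u ++ w ∈ langL X)
    {v w : List A} (hv : v ∈ langL X) (hw : w ∈ langL X) :
    pick X τ hspec v w ∈ langL X ∧ (pick X τ hspec v w).length = τ ∧
      v ++ pick X τ hspec v w ++ w ∈ langL X := by
  rw [pick]
  simp only [dif_pos (And.intro hv hw)]
  exact (hspec v hv w hw).choose_spec

noncomputable def fword {A : Type*} (X : Set (ℕ → A)) (τ : ℕ)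
    (hspec : ∀ v ∈ langL X, ∀ w ∈ langL X,
      ∃ u ∈ langL X, u.length = τ ∧ v ++ u ++ w ∈ langL X)
    (w0 w1 : List A) : List Bool → List A
  | [] => []
  | (b :: s) => (cond b w1 w0) ++ pick X τ hspec (cond b w1 w0) (fword X τ hspec w0 w1 s)
      ++ fword X τ hspec w0 w1 s

lemma fword_mem {A : Type*} (X : Set (ℕ → A)) (τ : ℕ)
    (hspec : ∀ v ∈ langL X, ∀ w ∈ langL X,
      ∃ u ∈ langL X, u.length = τ ∧ v ++ u ++ w ∈ langL X)
    (w0 w1 : List A) {n : ℕ} (hne : X.Nonempty)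
    (h0 : w0 ∈ langL X) (h1 : w1 ∈ langL X) (l0 : w0.length = n) (l1 : w1.length = n) :
    ∀ s : List Bool, fword X τ hspec w0 w1 s ∈ langL X ∧
      (fword X τ hspec w0 w1 s).length = s.length * (n + τ) := by
  intro s
  induction s with
  | nil => exact ⟨⟨hne.choose, hne.choose_spec, fun i => i.elim0⟩, by simp [fword]⟩
  | cons b s ih =>
    have hb : (cond b w1 w0) ∈ langL X := by cases b <;> simpa
    have lb : (cond b w1 w0).length = n := by cases b <;> simpa
    obtain ⟨hp1, hp2, hp3⟩ := pick_spec X τ hspec hb ih.1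
    refine ⟨hp3, ?_⟩
    simp only [fword, List.length_append, lb, hp2, ih.2, List.length_cons]
    ring

lemma fword_inj {A : Type*} (X : Set (ℕ → A)) (τ : ℕ)
    (hspec : ∀ v ∈ langL X, ∀ w ∈ langL X,
      ∃ u ∈ langL X, u.length = τ ∧ v ++ u ++ w ∈ langL X)
    (w0 w1 : List A) {n : ℕ} (hne : X.Nonempty)
    (h0 : w0 ∈ langL X) (h1 : w1 ∈ langL X)
    (l0 : w0.length = n) (l1 : w1.length = n) (hne01 : w0 ≠ w1) :
    ∀ s t : List Bool, s.length = t.length →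
      fword X τ hspec w0 w1 s = fword X τ hspec w0 w1 t → s = t := by
  intro s
  induction s with
  | nil => intro t hlen _; exact (List.length_eq_zero_iff.mp hlen.symm).symm
  | cons b s ih =>
    intro t hlen heq
    cases t with
    | nil => simp at hlen
    | cons c t =>
      have lb : (cond b w1 w0).length = n := by cases b <;> simpa
      have lc : (cond c w1 w0).length = n := by cases c <;> simpa
      simp only [fword] at heq
      have htake : (cond b w1 w0) = (cond c w1 w0) := by
        have := congrArg (List.take n) heq
        rwa [List.append_assoc, List.append_assoc,
          List.take_left' lb, List.take_left' lc] at this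
      have hbc : b = c := by
        cases b <;> cases c <;> simp_all
      subst hbc
      have hb : (cond b w1 w0) ∈ langL X := by cases b <;> simpa
      have hs := (fword_mem X τ hspec w0 w1 hne h0 h1 l0 l1 s).1
      have ht := (fword_mem X τ hspec w0 w1 hne h0 h1 l0 l1 t).1
      have hdrop : fword X τ hspec w0 w1 s = fword X τ hspec w0 w1 t := by
        have h2 := congrArg (List.drop (n + τ)) heq
        rwa [List.drop_left' (by simp [lb, (pick_spec X τ hspec hb hs).2.1]),
          List.drop_left' (by simp [lb, (pick_spec X τ hspec hb ht).2.1])] at h2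
      rw [ih t (by simpa using hlen) hdrop]

lemma wcount_pow {A : Type*} [Fintype A] (X : Set (ℕ → A)) (τ : ℕ)
    (hspec : ∀ v ∈ langL X, ∀ w ∈ langL X,
      ∃ u ∈ langL X, u.length = τ ∧ v ++ u ++ w ∈ langL X)
    (n : ℕ) (hne : X.Nonempty) (h2 : 2 ≤ wcount X n) :
    ∀ k : ℕ, 2 ^ k ≤ wcount X (k * (n + τ)) := by
  intro k
  have hfin : ∀ m : ℕ, {w ∈ langL X | w.length = m}.Finite := fun m =>
    (finite_len m).subset (fun w hw => hw.2)
  obtain ⟨w0, hw0, w1, hw1, hne01⟩ :=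
    (Set.one_lt_ncard (hfin n)).mp (lt_of_lt_of_le one_lt_two h2)
  set g : (Fin k → Bool) → List A :=
    fun v => fword X τ hspec w0 w1 (List.ofFn v) with hg
  have hginj : Function.Injective g := by
    intro v v' hvv
    apply List.ofFn_injective
    exact fword_inj X τ hspec w0 w1 hne hw0.1 hw1.1 hw0.2 hw1.2 hne01 _ _ (by simp) hvv
  have hsub : Set.range g ⊆ {w ∈ langL X | w.length = k * (n + τ)} := by
    rintro _ ⟨v, rfl⟩
    have := fword_mem X τ hspec w0 w1 hne hw0.1 hw1.1 hw0.2 hw1.2 (List.ofFn v)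
    exact ⟨this.1, by simpa using this.2⟩
  have hcard : (Set.range g).ncard = 2 ^ k := by
    rw [← Nat.card_coe_set_eq, Nat.card_range_of_injective hginj]
    simp [Nat.card_eq_fintype_card]
  calc 2 ^ k = (Set.range g).ncard := hcard.symm
    _ ≤ wcount X (k * (n + τ)) := Set.ncard_le_ncard hsub (hfin _)

/-- A shift space with strong specification (connecting words of length
exactly `τ`) and at least two length-`n` words has topological entropy at
least `log 2/(n+τ)`; in particular a nontrivial shift with strong
specification has positive entropy. -/
theorem stmt_14 {A : Type*} [Fintype A] [TopologicalSpace A] [DiscreteTopology A]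
    (X : Set (ℕ → A)) (hne : X.Nonempty) (hcl : IsClosed X)
    (hinv : shiftMap '' X = X) (τ : ℕ)
    (hspec : ∀ v ∈ langL X, ∀ w ∈ langL X,
      ∃ u ∈ langL X, u.length = τ ∧ v ++ u ++ w ∈ langL X)
    (h : ℝ)
    (hh : Tendsto (fun n : ℕ => Real.log (wcount X n) / n) atTop (nhds h)) :
    (∀ n : ℕ, 1 ≤ n → 2 ≤ wcount X n →
      Real.log 2 / ((n : ℝ) + τ) ≤ h) ∧
    ((∃ x ∈ X, ∃ y ∈ X, x ≠ y) → 0 < h) := by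
  have main : ∀ n : ℕ, 1 ≤ n → 2 ≤ wcount X n →
      Real.log 2 / ((n : ℝ) + τ) ≤ h := by
    intro n hn h2
    have hpos : 0 < n + τ := by omega
    have hsub : Tendsto (fun k : ℕ =>
        Real.log (wcount X (k * (n + τ))) / ((k * (n + τ) : ℕ) : ℝ)) atTop (nhds h) := by
      apply hh.comp
      exact tendsto_atTop_mono (fun k => Nat.le_mul_of_pos_right k hpos) tendsto_id
    refine ge_of_tendsto hsub ?_
    filter_upwards [eventually_ge_atTop 1] with k hk
    have hwc := wcount_pow X τ hspec n hne h2 k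
    have hlog : (k : ℝ) * Real.log 2 ≤ Real.log (wcount X (k * (n + τ))) := by
      rw [← Real.log_pow]
      apply Real.log_le_log (by positivity)
      exact_mod_cast hwc
    have hkpos : (0 : ℝ) < k := by exact_mod_cast hk
    have hNpos : (0 : ℝ) < (n : ℝ) + τ := by positivity
    have hcast : (((k * (n + τ) : ℕ)) : ℝ) = k * ((n : ℝ) + τ) := by push_cast; ring
    rw [hcast]
    calc Real.log 2 / ((n : ℝ) + τ)
        = (k * Real.log 2) / (k * ((n : ℝ) + τ)) := by
          rw [mul_div_mul_left _ _ (ne_of_gt hkpos)]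
      _ ≤ Real.log (wcount X (k * (n + τ))) / (k * ((n : ℝ) + τ)) := by
          exact div_le_div_of_nonneg_right hlog (by positivity)
  refine ⟨main, ?_⟩
  rintro ⟨x, hx, y, hy, hxy⟩
  obtain ⟨i, hi⟩ : ∃ i, x i ≠ y i := by
    by_contra hc
    push_neg at hc
    exact hxy (funext hc)
  have hx' : List.ofFn (fun j : Fin (i + 1) => x j) ∈ langL X :=
    ⟨x, hx, fun j => by simp only [List.get_ofFn, Fin.coe_cast]⟩
  have hy' : List.ofFn (fun j : Fin (i + 1) => y j) ∈ langL X :=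
    ⟨y, hy, fun j => by simp only [List.get_ofFn, Fin.coe_cast]⟩
  have hne2 : List.ofFn (fun j : Fin (i + 1) => x j) ≠ List.ofFn (fun j : Fin (i + 1) => y j) := by
    intro hc
    apply hi
    have h3 := List.get_of_eq hc ⟨i, by simp⟩
    simpa only [List.get_ofFn, Fin.coe_cast] using h3
  have h2 : 2 ≤ wcount X (i + 1) := by
    rw [wcount]
    refine (Set.one_lt_ncard ((finite_len (i+1)).subset (fun w hw => hw.2))).mpr ?_
    exact ⟨_, ⟨hx', by simp⟩, _, ⟨hy', by simp⟩, hne2⟩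
  have := main (i + 1) (by omega) h2
  refine lt_of_lt_of_le ?_ this
  apply div_pos (Real.log_pos (by norm_num))
  positivity
end
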